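/- arXiv:1601.03978 — 5 statements merged into one kernel-verified Lean document; each statement's English description precedes it below -/
import Mathlib

section
/- (Stechkin's lemma) Let a_1 ≥ a_2 ≥ ⋯ be a sequence of nonnegative real numbers. Then (1/2) ∑_{n=1}^∞ n^{-1/2} (∑_{k=n}^∞ a_k^2)^{1/2} ≤ ∑_{k=1}^∞ a_k ≤ (2/√3) ∑_{n=1}^∞ n^{-1/2} (∑_{k=n}^∞ a_k^2)^{1/2}. -/
open scoped ENNReal NNReal
open Filter

namespace StechkinAux


lemma top_sq : (⊤ : ℝ≥0∞) ^ 2 = ⊤ := by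
  rw [pow_two]; exact ENNReal.top_mul_top

/-- AM–GM in `ℝ≥0∞`. -/
lemma two_mul_le_sq_add_sq (x y : ℝ≥0∞) : 2 * (x * y) ≤ x ^ 2 + y ^ 2 := by
  rcases eq_or_ne x 0 with rfl | hx0
  · simp
  rcases eq_or_ne y 0 with rfl | hy0
  · simp
  rcases eq_or_ne x ⊤ with rfl | hxt
  · rw [top_sq]; simp
  rcases eq_or_ne y ⊤ with rfl | hyt
  · rw [top_sq]; simp
  lift x to ℝ≥0 using hxt
  lift y to ℝ≥0 using hyt
  have h : (2 : ℝ≥0) * (x * y) ≤ x ^ 2 + y ^ 2 := by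
    have h2 : (2 : ℝ) * ((x:ℝ) * (y:ℝ)) ≤ (x:ℝ) ^ 2 + (y:ℝ) ^ 2 := by
      nlinarith [sq_nonneg ((x:ℝ) - (y:ℝ))]
    exact_mod_cast h2
  calc (2 : ℝ≥0∞) * (x * y) = ((2 * (x * y) : ℝ≥0) : ℝ≥0∞) := by push_cast; ring
    _ ≤ ((x ^ 2 + y ^ 2 : ℝ≥0) : ℝ≥0∞) := by exact_mod_cast h
    _ = (x:ℝ≥0∞) ^ 2 + (y:ℝ≥0∞) ^ 2 := by push_cast; ring

/-- product of tsums as a double tsum -/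
lemma tsum_mul_tsum (f g : ℕ → ℝ≥0∞) :
    (∑' i, f i) * (∑' j, g j) = ∑' i, ∑' j, f i * g j := by
  rw [← ENNReal.tsum_mul_right]
  exact tsum_congr fun i => (ENNReal.tsum_mul_left).symm

/-- Cauchy–Schwarz for `ℝ≥0∞`-valued series. -/
lemma tsum_cs (f g : ℕ → ℝ≥0∞) :
    (∑' i, f i * g i) ^ 2 ≤ (∑' i, f i ^ 2) * (∑' i, g i ^ 2) := by
  have key : 2 * ((∑' i, f i * g i) ^ 2) ≤ 2 * ((∑' i, f i ^ 2) * (∑' i, g i ^ 2)) := by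
    have lhs : (∑' i, f i * g i) ^ 2 = ∑' (i : ℕ), ∑' (j : ℕ), (f i * g i) * (f j * g j) := by
      rw [pow_two]; exact tsum_mul_tsum _ _
    have rhs : (∑' i, f i ^ 2) * (∑' i, g i ^ 2) = ∑' (i : ℕ), ∑' (j : ℕ), f i ^ 2 * g j ^ 2 :=
      tsum_mul_tsum _ _
    have sym : ∑' (i : ℕ), ∑' (j : ℕ), f j ^ 2 * g i ^ 2
        = ∑' (i : ℕ), ∑' (j : ℕ), f i ^ 2 * g j ^ 2 := ENNReal.tsum_comm
    rw [lhs, rhs, ← ENNReal.tsum_mul_left]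
    calc ∑' i, 2 * ∑' (j : ℕ), (f i * g i) * (f j * g j)
        = ∑' (i : ℕ), ∑' (j : ℕ), 2 * ((f i * g i) * (f j * g j)) :=
          tsum_congr fun i => (ENNReal.tsum_mul_left).symm
      _ ≤ ∑' (i : ℕ), ∑' (j : ℕ), (f i ^ 2 * g j ^ 2 + f j ^ 2 * g i ^ 2) := by
          refine ENNReal.tsum_le_tsum fun i => ENNReal.tsum_le_tsum fun j => ?_
          have e : (f i * g i) * (f j * g j) = (f i * g j) * (f j * g i) := by ring
          rw [e]
          calc 2 * ((f i * g j) * (f j * g i)) ≤ (f i * g j) ^ 2 + (f j * g i) ^ 2 :=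
                two_mul_le_sq_add_sq _ _
            _ = f i ^ 2 * g j ^ 2 + f j ^ 2 * g i ^ 2 := by ring
      _ = (∑' (i : ℕ), ∑' (j : ℕ), f i ^ 2 * g j ^ 2)
          + ∑' (i : ℕ), ∑' (j : ℕ), f j ^ 2 * g i ^ 2 := by
          rw [← ENNReal.tsum_add]
          exact tsum_congr fun i => ENNReal.tsum_add
      _ = 2 * ∑' (i : ℕ), ∑' (j : ℕ), f i ^ 2 * g j ^ 2 := by rw [sym, two_mul]
  exact (ENNReal.mul_le_mul_iff_right (by norm_num) (by norm_num)).mp key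


/-- reindex a tail sum -/
lemma tsum_tail (h : ℕ → ℝ≥0∞) (n : ℕ) :
    ∑' j, h (n + j) = ∑' K, if n ≤ K then h K else 0 := by
  have inj : Function.Injective (fun j => n + j) := by
    intro i j hij
    simp only [] at hij
    omega
  have hsupp : Function.support (fun K => if n ≤ K then h K else 0)
      ⊆ Set.range (fun j => n + j) := by
    intro K hK
    by_cases hnK : n ≤ K
    · exact ⟨K - n, by dsimp; omega⟩
    · simp [hnK] at hK
  have := Function.Injective.tsum_eq inj (f := fun K => if n ≤ K then h K else 0) hsupp
  rw [← this]
  exact tsum_congr fun j => by simp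

/-- antidiagonal swap -/
lemma tsum_antidiag (G : ℕ → ℕ → ℝ≥0∞) :
    ∑' n, ∑' j, G n j = ∑' K, ∑ j ∈ Finset.range (K + 1), G (K - j) j := by
  have h1 : ∑' n, ∑' j, G n j = ∑' p : ℕ × ℕ, G p.1 p.2 :=
    (ENNReal.tsum_prod' (f := fun p => G p.1 p.2)).symm
  have inj : Function.Injective (fun p : ℕ × ℕ => (p.1 + p.2, p.2)) := by
    intro p q h
    simp only [Prod.mk.injEq] at h
    obtain ⟨h1, h2⟩ := h
    exact Prod.ext (by omega) h2
  have h2 : ∑' p : ℕ × ℕ, G p.1 p.2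
      = ∑' q : ℕ × ℕ, (if q.2 ≤ q.1 then G (q.1 - q.2) q.2 else 0) := by
    rw [← Function.Injective.tsum_eq inj
      (f := fun q : ℕ × ℕ => if q.2 ≤ q.1 then G (q.1 - q.2) q.2 else 0) ?_]
    · exact tsum_congr fun p => by simp
    · intro q hq
      by_cases h : q.2 ≤ q.1
      · refine ⟨(q.1 - q.2, q.2), ?_⟩
        have : q.1 - q.2 + q.2 = q.1 := by omega
        simp only [this]
      · simp [h] at hq
  rw [h1, h2, ENNReal.tsum_prod' (f := fun q : ℕ × ℕ => if q.2 ≤ q.1 then G (q.1 - q.2) q.2 else 0)]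
  refine tsum_congr fun K => ?_
  rw [tsum_eq_sum (s := Finset.range (K + 1)) ?_]
  · exact Finset.sum_congr rfl fun j hj => by
      simp only [Finset.mem_range] at hj
      simp [Nat.lt_succ_iff.mp hj]
  · intro j hj
    simp only [Finset.mem_range] at hj
    have : ¬ j ≤ K := by omega
    simp [this]


lemma sqrt_le_of_sq_le {x q : ℝ} (hq : 0 ≤ q) (h : x ≤ q ^ 2) : Real.sqrt x ≤ q := by
  rw [← Real.sqrt_sq hq]
  exact Real.sqrt_le_sqrt h

/-- cubic Taylor lower bound for exp -/
lemma exp_cubic (x : ℝ) (hx : 0 ≤ x) : 1 + x + x ^ 2 / 2 + x ^ 3 / 6 ≤ Real.exp x := by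
  have h := Real.sum_le_exp_of_nonneg hx 4
  have e : ∑ i ∈ Finset.range 4, x ^ i / (Nat.factorial i : ℝ)
      = 1 + x + x ^ 2 / 2 + x ^ 3 / 6 := by
    norm_num [Finset.sum_range_succ, Nat.factorial]
  linarith [e ▸ h]

/-- The step inequality: `log (m+7/2) - log (m+1/2) ≤ 3/√(m(m+4))` for `m ≥ 1`. -/
lemma log_step {m : ℝ} (hm : 1 ≤ m) :
    Real.log (m + 7/2) - Real.log (m + 1/2) ≤ 3 / Real.sqrt (m * (m + 4)) := by
  have hm0 : (0:ℝ) ≤ m := by linarith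
  have hs0 : 0 < m * (m + 4) := by nlinarith
  set s := Real.sqrt (m * (m + 4)) with hsdef
  have hs : 0 < s := Real.sqrt_pos.2 hs0
  have hs2 : s ^ 2 = m * (m + 4) := Real.sq_sqrt hs0.le
  have hs3 : s ^ 3 = (m * (m + 4)) * s := by
    rw [pow_succ, hs2]
  have hx : (0:ℝ) ≤ 3 / s := by positivity
  have hC : (0:ℝ) < 3*m^2 + 7.5*m - 2.25 := by nlinarith
  have hD : (0:ℝ) < 3*m^3 + 13.5*m^2 + 10.5*m + 2.25 := by nlinarith
  have hsq : (s * (3*m^2 + 7.5*m - 2.25))^2 ≤ (3*m^3 + 13.5*m^2 + 10.5*m + 2.25)^2 := by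
    rw [mul_pow, hs2]
    nlinarith [hm0, sq_nonneg m, mul_nonneg hm0 (sq_nonneg m),
      mul_nonneg (mul_nonneg hm0 hm0) (sq_nonneg m)]
  have hpoly : s * (3*m^2 + 7.5*m - 2.25) ≤ 3*m^3 + 13.5*m^2 + 10.5*m + 2.25 := by
    nlinarith [hsq, mul_nonneg hs.le hC.le, hD]
  have hratio : (m + 7/2) / (m + 1/2) ≤ 1 + 3/s + (3/s) ^ 2 / 2 + (3/s) ^ 3 / 6 := by
    rw [div_le_iff₀ (by linarith)]
    have hexpand : (1 + 3/s + (3/s)^2/2 + (3/s)^3/6) * (m + 1/2) * s^3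
        = (m+1/2)*s^3 + 3*(m+1/2)*s^2 + (9/2)*(m+1/2)*s + 9/2*(m+1/2) := by
      field_simp
      ring
    have key : (m + 7/2) * s^3
        ≤ (m+1/2)*s^3 + 3*(m+1/2)*s^2 + (9/2)*(m+1/2)*s + 9/2*(m+1/2) := by
      rw [hs3, hs2]
      nlinarith [hpoly]
    have key2 : (m + 7/2) * s^3 ≤ (1 + 3/s + (3/s)^2/2 + (3/s)^3/6) * (m + 1/2) * s^3 := by
      rw [hexpand]; exact key
    have hs3pos : 0 < s ^ 3 := by positivity
    exact le_of_mul_le_mul_right key2 hs3pos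
  have hexp : (m + 7/2) / (m + 1/2) ≤ Real.exp (3/s) :=
    hratio.trans (exp_cubic _ hx)
  have h1 : Real.log ((m + 7/2) / (m + 1/2)) ≤ 3/s := by
    rw [Real.log_le_iff_le_exp (by positivity)]
    exact hexp
  rw [← Real.log_div (by linarith) (by linarith)]
  exact h1


/-- `1/√(j+1) ≤ 2(√(j+1) - √j)` -/
lemma inv_sqrt_le (j : ℕ) :
    1 / Real.sqrt ((j:ℝ)+1) ≤ 2*(Real.sqrt ((j:ℝ)+1) - Real.sqrt (j:ℝ)) := by
  have hj0 : (0:ℝ) ≤ (j:ℝ) := Nat.cast_nonneg j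
  have hu : 0 < Real.sqrt ((j:ℝ)+1) := Real.sqrt_pos.2 (by linarith)
  have hv : 0 ≤ Real.sqrt (j:ℝ) := Real.sqrt_nonneg _
  have hu2 : Real.sqrt ((j:ℝ)+1) ^ 2 = (j:ℝ)+1 := Real.sq_sqrt (by linarith)
  have hv2 : Real.sqrt (j:ℝ) ^ 2 = (j:ℝ) := Real.sq_sqrt hj0
  rw [div_le_iff₀ hu]
  nlinarith [sq_nonneg (Real.sqrt ((j:ℝ)+1) - Real.sqrt (j:ℝ))]

/-- `∑_{j≤K} √(j+1)/√(K-j+1) ≤ 2(K+1)` -/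
lemma sum_ratio_le (K : ℕ) :
    ∑ j ∈ Finset.range (K+1), Real.sqrt ((j:ℝ)+1) / Real.sqrt (((K-j:ℕ):ℝ)+1)
      ≤ 2*((K:ℝ)+1) := by
  have hrefl := Finset.sum_range_reflect
    (fun j => Real.sqrt ((j:ℝ)+1) / Real.sqrt (((K-j:ℕ):ℝ)+1)) (K+1)
  rw [← hrefl]
  have hterm : ∀ j ∈ Finset.range (K+1),
      Real.sqrt (((K+1-1-j:ℕ):ℝ)+1) / Real.sqrt (((K-(K+1-1-j):ℕ):ℝ)+1)
        ≤ 2*Real.sqrt ((K:ℝ)+1)*(Real.sqrt ((j:ℝ)+1) - Real.sqrt (j:ℝ)) := by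
    intro j hj
    simp only [Finset.mem_range] at hj
    have hjK : j ≤ K := by omega
    have e1 : K+1-1-j = K - j := by omega
    have e2 : K - (K+1-1-j) = j := by omega
    rw [e1]
    have e2' : K - (K - j) = j := by omega
    rw [e2']
    have hnum : Real.sqrt (((K-j:ℕ):ℝ)+1) ≤ Real.sqrt ((K:ℝ)+1) := by
      apply Real.sqrt_le_sqrt
      have : ((K-j:ℕ):ℝ) ≤ (K:ℝ) := by exact_mod_cast Nat.sub_le K j
      linarith
    have hden : 0 < Real.sqrt ((j:ℝ)+1) :=
      Real.sqrt_pos.2 (by positivity)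
    calc Real.sqrt (((K-j:ℕ):ℝ)+1) / Real.sqrt ((j:ℝ)+1)
        ≤ Real.sqrt ((K:ℝ)+1) / Real.sqrt ((j:ℝ)+1) := by
          gcongr
      _ = Real.sqrt ((K:ℝ)+1) * (1 / Real.sqrt ((j:ℝ)+1)) := by ring
      _ ≤ Real.sqrt ((K:ℝ)+1) * (2*(Real.sqrt ((j:ℝ)+1) - Real.sqrt (j:ℝ))) := by
          apply mul_le_mul_of_nonneg_left (inv_sqrt_le j) (Real.sqrt_nonneg _)
      _ = 2*Real.sqrt ((K:ℝ)+1)*(Real.sqrt ((j:ℝ)+1) - Real.sqrt (j:ℝ)) := by ring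
  calc ∑ j ∈ Finset.range (K+1),
      Real.sqrt (((K+1-1-j:ℕ):ℝ)+1) / Real.sqrt (((K-(K+1-1-j):ℕ):ℝ)+1)
      ≤ ∑ j ∈ Finset.range (K+1),
          2*Real.sqrt ((K:ℝ)+1)*(Real.sqrt ((j:ℝ)+1) - Real.sqrt (j:ℝ)) :=
        Finset.sum_le_sum hterm
    _ = 2*Real.sqrt ((K:ℝ)+1) * ∑ j ∈ Finset.range (K+1),
          (Real.sqrt ((j:ℝ)+1) - Real.sqrt (j:ℝ)) := by rw [Finset.mul_sum]
    _ = 2*Real.sqrt ((K:ℝ)+1) * (Real.sqrt ((K:ℝ)+1) - Real.sqrt ((0:ℕ):ℝ)) := by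
        congr 1
        have := Finset.sum_range_sub (fun j => Real.sqrt ((j:ℕ):ℝ)) (K+1)
        rw [show ∑ j ∈ Finset.range (K+1), (Real.sqrt ((j:ℝ)+1) - Real.sqrt (j:ℝ))
            = ∑ j ∈ Finset.range (K+1),
              (Real.sqrt (((j+1:ℕ)):ℝ) - Real.sqrt ((j:ℕ):ℝ)) from ?_, this]
        · push_cast; ring
        · refine Finset.sum_congr rfl fun j _ => ?_
          push_cast
          ring
    _ ≤ 2*((K:ℝ)+1) := by
        have e0 : Real.sqrt ((0:ℕ):ℝ) = 0 := by norm_num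
        rw [e0, sub_zero]
        have := Real.mul_self_sqrt (show (0:ℝ) ≤ (K:ℝ)+1 by positivity)
        nlinarith [this]
  

lemma U_sq_sum (n : ℕ) (J : ℕ) :
    ∑ j ∈ Finset.range J,
      (4 / Real.sqrt (((n:ℝ)+4*(j:ℝ)+1) * ((n:ℝ)+4*(j:ℝ)+5)))^2 ≤ 4/((n:ℝ)+1) := by
  have hψ : ∀ j : ℕ, (4 / Real.sqrt (((n:ℝ)+4*(j:ℝ)+1) * ((n:ℝ)+4*(j:ℝ)+5)))^2
      = 4/((n:ℝ)+4*(j:ℝ)+1) - 4/((n:ℝ)+4*((j:ℝ)+1)+1) := by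
    intro j
    have hj0 : (0:ℝ) ≤ (j:ℝ) := Nat.cast_nonneg j
    have hn0 : (0:ℝ) ≤ (n:ℝ) := Nat.cast_nonneg n
    have hx : (0:ℝ) < ((n:ℝ)+4*(j:ℝ)+1) * ((n:ℝ)+4*(j:ℝ)+5) := by positivity
    rw [div_pow, Real.sq_sqrt hx.le]
    rw [div_sub_div _ _ (by positivity) (by positivity)]
    rw [div_eq_div_iff hx.ne' (show (((n:ℝ)+4*(j:ℝ)+1) * ((n:ℝ)+4*((j:ℝ)+1)+1)) ≠ 0 by positivity)]
    ring
  calc ∑ j ∈ Finset.range J,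
      (4 / Real.sqrt (((n:ℝ)+4*(j:ℝ)+1) * ((n:ℝ)+4*(j:ℝ)+5)))^2
      = ∑ j ∈ Finset.range J,
        ((fun i : ℕ => 4/((n:ℝ)+4*(i:ℝ)+1)) j - (fun i : ℕ => 4/((n:ℝ)+4*(i:ℝ)+1)) (j+1)) := by
        refine Finset.sum_congr rfl fun j _ => ?_
        rw [hψ j]
        simp only []
        push_cast
        ring_nf
    _ = 4/((n:ℝ)+4*((0:ℕ):ℝ)+1) - 4/((n:ℝ)+4*((J:ℕ):ℝ)+1) :=
        Finset.sum_range_sub' (fun i : ℕ => 4/((n:ℝ)+4*(i:ℝ)+1)) J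
    _ ≤ 4/((n:ℝ)+1) := by
        have hn0 : (0:ℝ) ≤ (n:ℝ) := Nat.cast_nonneg n
        have hJ : (0:ℝ) ≤ 4/((n:ℝ)+4*((J:ℕ):ℝ)+1) := by positivity
        norm_num
        linarith


lemma div4_ge {M q : ℝ} (hM : 0 < M) (hq : Real.sqrt M ≤ q) : 4 / q ≤ 4 / Real.sqrt M :=
  div_le_div_of_nonneg_left (by norm_num) (Real.sqrt_pos.2 hM) hq

-- numeric exp bound
lemma exp_bound : Real.exp ((3/4) * Real.sqrt 3) ≤ 41/11 := by
  have s3 : Real.sqrt 3 ≤ 26/15 := sqrt_le_of_sq_le (by norm_num) (by norm_num)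
  have h1 : (3/4) * Real.sqrt 3 ≤ 13/10 := by nlinarith [Real.sqrt_nonneg 3]
  have e20 : Real.exp (1/20) < 20/19 := by
    have hh : (19/20 : ℝ) < (Real.exp (1/20))⁻¹ := by
      rw [← Real.exp_neg]
      linarith [Real.add_one_lt_exp (show (-(1/20):ℝ) ≠ 0 by norm_num)]
    have h0 := Real.exp_pos (1/20)
    have h2 := mul_lt_mul_of_pos_left hh h0
    rw [mul_inv_cancel₀ (ne_of_gt h0)] at h2
    linarith
  have e310 : Real.exp (3/10) ≤ (20/19)^6 := by
    have : Real.exp ((6:ℕ) * (1/20)) = Real.exp (1/20) ^ 6 := Real.exp_nat_mul _ 6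
    have h6 : ((6:ℕ):ℝ) * (1/20) = 3/10 := by norm_num
    rw [h6] at this
    rw [this]
    have h0 := (Real.exp_pos (1/20)).le
    exact pow_le_pow_left₀ h0 e20.le 6
  have e13 : Real.exp (13/10) ≤ 2.7182818286 * (20/19)^6 := by
    have : Real.exp (13/10) = Real.exp 1 * Real.exp (3/10) := by
      rw [← Real.exp_add]; norm_num
    rw [this]
    have h1e := Real.exp_one_lt_d9.le
    have h2e := (Real.exp_pos (3/10)).le
    gcongr
  calc Real.exp ((3/4) * Real.sqrt 3) ≤ Real.exp (13/10) := Real.exp_le_exp.2 h1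
    _ ≤ 2.7182818286 * (20/19)^6 := e13
    _ ≤ 41/11 := by norm_num

lemma log_ratio {k : ℕ} (hk : 5 ≤ k) :
    Real.sqrt 3 ≤ (4/3) * (Real.log (4*(k:ℝ) + 1/2) - Real.log ((k:ℝ) + 1/2)) := by
  have hk5 : (5:ℝ) ≤ (k:ℝ) := by exact_mod_cast hk
  have hpos1 : (0:ℝ) < (k:ℝ) + 1/2 := by linarith
  have hpos2 : (0:ℝ) < 4*(k:ℝ) + 1/2 := by linarith
  have hlogdiv : Real.log (4*(k:ℝ) + 1/2) - Real.log ((k:ℝ) + 1/2)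
      = Real.log ((4*(k:ℝ) + 1/2) / ((k:ℝ) + 1/2)) := by
    rw [Real.log_div (by linarith) (by linarith)]
  have hratio : (41/11 : ℝ) ≤ (4*(k:ℝ) + 1/2) / ((k:ℝ) + 1/2) := by
    rw [le_div_iff₀ hpos1]
    linarith
  have hlog41 : (3/4) * Real.sqrt 3 ≤ Real.log (41/11) :=
    (Real.le_log_iff_exp_le (by norm_num)).2 exp_bound
  have hmono : Real.log (41/11) ≤ Real.log ((4*(k:ℝ) + 1/2) / ((k:ℝ) + 1/2)) :=
    Real.log_le_log (by norm_num) hratio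
  rw [hlogdiv]
  nlinarith [hlog41, hmono]


lemma key_real (k : ℕ) (hk : 1 ≤ k) :
    Real.sqrt 3 ≤ ∑ j ∈ Finset.range k,
      4 / Real.sqrt (((k:ℝ) + 3*(j:ℝ)) * ((k:ℝ) + 3*(j:ℝ) + 4)) := by
  rcases lt_or_ge k 5 with hk5 | hk5
  · have s3 : Real.sqrt 3 ≤ 1.7320509 := sqrt_le_of_sq_le (by norm_num) (by norm_num)
    interval_cases k
    · rw [Finset.sum_range_one]
      have e : (((1:ℕ):ℝ) + 3*((0:ℕ):ℝ)) * (((1:ℕ):ℝ) + 3*((0:ℕ):ℝ) + 4) = 5 := by norm_num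
      rw [e]
      have h5 : Real.sqrt 5 ≤ 2.2360680 := sqrt_le_of_sq_le (by norm_num) (by norm_num)
      calc Real.sqrt 3 ≤ 1.7320509 := s3
        _ ≤ 4/2.2360680 := by norm_num
        _ ≤ 4/Real.sqrt 5 := div4_ge (by norm_num) h5
    · rw [Finset.sum_range_succ, Finset.sum_range_one]
      have e0 : (((2:ℕ):ℝ) + 3*((0:ℕ):ℝ)) * (((2:ℕ):ℝ) + 3*((0:ℕ):ℝ) + 4) = 12 := by norm_num
      have e1 : (((2:ℕ):ℝ) + 3*((1:ℕ):ℝ)) * (((2:ℕ):ℝ) + 3*((1:ℕ):ℝ) + 4) = 45 := by norm_num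
      rw [e0, e1]
      have h12 : Real.sqrt 12 ≤ 3.4641017 := sqrt_le_of_sq_le (by norm_num) (by norm_num)
      have h45 : Real.sqrt 45 ≤ 6.7082040 := sqrt_le_of_sq_le (by norm_num) (by norm_num)
      calc Real.sqrt 3 ≤ 1.7320509 := s3
        _ ≤ 4/3.4641017 + 4/6.7082040 := by norm_num
        _ ≤ 4/Real.sqrt 12 + 4/Real.sqrt 45 :=
            add_le_add (div4_ge (by norm_num) h12) (div4_ge (by norm_num) h45)
    · rw [Finset.sum_range_succ, Finset.sum_range_succ, Finset.sum_range_one]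
      have e0 : (((3:ℕ):ℝ) + 3*((0:ℕ):ℝ)) * (((3:ℕ):ℝ) + 3*((0:ℕ):ℝ) + 4) = 21 := by norm_num
      have e1 : (((3:ℕ):ℝ) + 3*((1:ℕ):ℝ)) * (((3:ℕ):ℝ) + 3*((1:ℕ):ℝ) + 4) = 60 := by norm_num
      have e2 : (((3:ℕ):ℝ) + 3*((2:ℕ):ℝ)) * (((3:ℕ):ℝ) + 3*((2:ℕ):ℝ) + 4) = 117 := by norm_num
      rw [e0, e1, e2]
      have h21 : Real.sqrt 21 ≤ 4.5825757 := sqrt_le_of_sq_le (by norm_num) (by norm_num)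
      have h60 : Real.sqrt 60 ≤ 7.7459667 := sqrt_le_of_sq_le (by norm_num) (by norm_num)
      have h117 : Real.sqrt 117 ≤ 10.8166539 := sqrt_le_of_sq_le (by norm_num) (by norm_num)
      calc Real.sqrt 3 ≤ 1.7320509 := s3
        _ ≤ 4/4.5825757 + 4/7.7459667 + 4/10.8166539 := by norm_num
        _ ≤ 4/Real.sqrt 21 + 4/Real.sqrt 60 + 4/Real.sqrt 117 := by
            refine add_le_add (add_le_add ?_ ?_) ?_
            · exact div4_ge (by norm_num) h21
            · exact div4_ge (by norm_num) h60
            · exact div4_ge (by norm_num) h117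
    · rw [Finset.sum_range_succ, Finset.sum_range_succ, Finset.sum_range_succ,
        Finset.sum_range_one]
      have e0 : (((4:ℕ):ℝ) + 3*((0:ℕ):ℝ)) * (((4:ℕ):ℝ) + 3*((0:ℕ):ℝ) + 4) = 32 := by norm_num
      have e1 : (((4:ℕ):ℝ) + 3*((1:ℕ):ℝ)) * (((4:ℕ):ℝ) + 3*((1:ℕ):ℝ) + 4) = 77 := by norm_num
      have e2 : (((4:ℕ):ℝ) + 3*((2:ℕ):ℝ)) * (((4:ℕ):ℝ) + 3*((2:ℕ):ℝ) + 4) = 140 := by norm_num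
      have e3 : (((4:ℕ):ℝ) + 3*((3:ℕ):ℝ)) * (((4:ℕ):ℝ) + 3*((3:ℕ):ℝ) + 4) = 221 := by norm_num
      rw [e0, e1, e2, e3]
      have h32 : Real.sqrt 32 ≤ 5.6568543 := sqrt_le_of_sq_le (by norm_num) (by norm_num)
      have h77 : Real.sqrt 77 ≤ 8.7749644 := sqrt_le_of_sq_le (by norm_num) (by norm_num)
      have h140 : Real.sqrt 140 ≤ 11.8321596 := sqrt_le_of_sq_le (by norm_num) (by norm_num)
      have h221 : Real.sqrt 221 ≤ 14.8660688 := sqrt_le_of_sq_le (by norm_num) (by norm_num)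
      calc Real.sqrt 3 ≤ 1.7320509 := s3
        _ ≤ 4/5.6568543 + 4/8.7749644 + 4/11.8321596 + 4/14.8660688 := by norm_num
        _ ≤ 4/Real.sqrt 32 + 4/Real.sqrt 77 + 4/Real.sqrt 140 + 4/Real.sqrt 221 := by
            refine add_le_add (add_le_add (add_le_add ?_ ?_) ?_) ?_
            · exact div4_ge (by norm_num) h32
            · exact div4_ge (by norm_num) h77
            · exact div4_ge (by norm_num) h140
            · exact div4_ge (by norm_num) h221
  · -- k ≥ 5 : log telescoping
    set φ : ℕ → ℝ := fun j => Real.log ((k:ℝ) + 3*(j:ℝ) + 1/2) with hφ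
    have hk1 : (1:ℝ) ≤ (k:ℝ) := by exact_mod_cast hk
    have hterm : ∀ j ∈ Finset.range k,
        (4/3) * (φ (j+1) - φ j)
          ≤ 4 / Real.sqrt (((k:ℝ) + 3*(j:ℝ)) * ((k:ℝ) + 3*(j:ℝ) + 4)) := by
      intro j _
      have hj0 : (0:ℝ) ≤ (j:ℝ) := Nat.cast_nonneg j
      have hm : (1:ℝ) ≤ (k:ℝ) + 3*(j:ℝ) := by linarith
      have hls := log_step hm
      have harg1 : φ (j+1) = Real.log (((k:ℝ) + 3*(j:ℝ)) + 7/2) := by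
        simp only [hφ]
        congr 1
        push_cast
        ring
      have harg0 : φ j = Real.log (((k:ℝ) + 3*(j:ℝ)) + 1/2) := by
        simp only [hφ]
      rw [harg1, harg0]
      have heq : (4:ℝ)/3 * (3 / Real.sqrt (((k:ℝ) + 3*(j:ℝ)) * ((k:ℝ) + 3*(j:ℝ) + 4)))
          = 4 / Real.sqrt (((k:ℝ) + 3*(j:ℝ)) * ((k:ℝ) + 3*(j:ℝ) + 4)) := by
        ring
      calc (4/3) * (Real.log (((k:ℝ) + 3*(j:ℝ)) + 7/2) - Real.log (((k:ℝ) + 3*(j:ℝ)) + 1/2))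
          ≤ (4/3) * (3 / Real.sqrt (((k:ℝ) + 3*(j:ℝ)) * ((k:ℝ) + 3*(j:ℝ) + 4))) := by
            linarith
        _ = _ := heq
    calc Real.sqrt 3
        ≤ (4/3) * (Real.log (4*(k:ℝ) + 1/2) - Real.log ((k:ℝ) + 1/2)) := log_ratio hk5
      _ = (4/3) * (φ k - φ 0) := by
          have a1 : φ k = Real.log (4*(k:ℝ) + 1/2) := by
            simp only [hφ]
            congr 1
            ring
          have a0 : φ 0 = Real.log ((k:ℝ) + 1/2) := by
            simp only [hφ]
            norm_num
          rw [a1, a0]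
      _ = ∑ j ∈ Finset.range k, (4/3) * (φ (j+1) - φ j) := by
          rw [← Finset.mul_sum, Finset.sum_range_sub φ k]
      _ ≤ _ := Finset.sum_le_sum hterm


-- assumed (proved in other files)
noncomputable def Ur (n j : ℕ) : ℝ := 4 / Real.sqrt (((n:ℝ)+4*(j:ℝ)+1) * ((n:ℝ)+4*(j:ℝ)+5))

lemma Ur_nonneg (n j : ℕ) : 0 ≤ Ur n j := by
  unfold Ur
  positivity

noncomputable def Vw (n j : ℕ) : ℝ≥0∞ := ENNReal.ofReal (Ur n j)

lemma Vnorm (n : ℕ) : ∑' j, (Vw n j)^2 ≤ ENNReal.ofReal (4/((n:ℝ)+1)) := by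
  apply Summable.tsum_le_of_sum_range_le ENNReal.summable
  intro J
  have e : ∀ j, (Vw n j)^2 = ENNReal.ofReal ((Ur n j)^2) := fun j => by
    rw [Vw, ← ENNReal.ofReal_pow (Ur_nonneg n j)]
  calc ∑ j ∈ Finset.range J, (Vw n j)^2
      = ∑ j ∈ Finset.range J, ENNReal.ofReal ((Ur n j)^2) :=
        Finset.sum_congr rfl fun j _ => e j
    _ = ENNReal.ofReal (∑ j ∈ Finset.range J, (Ur n j)^2) :=
        (ENNReal.ofReal_sum_of_nonneg fun j _ => sq_nonneg _).symm
    _ ≤ ENNReal.ofReal (4/((n:ℝ)+1)) := ENNReal.ofReal_le_ofReal (U_sq_sum n J)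

lemma upper (a : ℕ → ℝ≥0∞) :
    (∑' k, a k) ≤ ENNReal.ofReal (2 / Real.sqrt 3) *
      (∑' n : ℕ, ((n : ℝ≥0∞) + 1) ^ (-(1 / 2 : ℝ)) *
        (∑' k : ℕ, a (n + k) ^ (2 : ℝ)) ^ ((1 : ℝ) / 2)) := by
  set T : ℕ → ℝ≥0∞ := fun n => ∑' k : ℕ, a (n + k) ^ (2 : ℝ) with hT
  set X : ℕ → ℝ≥0∞ := fun n => ∑' j : ℕ, Vw n j * a (n + j) with hX
  -- step 1: pointwise bound
  have step1 : ∀ n : ℕ, ENNReal.ofReal (1/2) * X n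
      ≤ ((n : ℝ≥0∞) + 1) ^ (-(1 / 2 : ℝ)) * T n ^ ((1 : ℝ) / 2) := by
    intro n
    have hn1 : (0:ℝ) < (n:ℝ)+1 := by positivity
    have hsq : ∑' j : ℕ, (a (n + j))^2 = T n := by
      refine tsum_congr fun j => ?_
      rw [← ENNReal.rpow_natCast (a (n + j)) 2]
      norm_num
    have cs : (X n)^2 ≤ ENNReal.ofReal (4/((n:ℝ)+1)) * T n := by
      calc (X n)^2 ≤ (∑' j, (Vw n j)^2) * (∑' j, (a (n+j))^2) := tsum_cs _ _
        _ ≤ ENNReal.ofReal (4/((n:ℝ)+1)) * T n := by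
            rw [hsq]
            exact mul_le_mul_left (Vnorm n) _
    have hXval : X n = ((X n)^2) ^ ((1:ℝ)/2) := by
      rw [← ENNReal.rpow_natCast (X n) 2, ← ENNReal.rpow_mul]
      norm_num
    have hmono : X n ≤ (ENNReal.ofReal (4/((n:ℝ)+1)) * T n) ^ ((1:ℝ)/2) := by
      rw [hXval]
      exact ENNReal.rpow_le_rpow cs (by norm_num)
    have hsplit : (ENNReal.ofReal (4/((n:ℝ)+1)) * T n) ^ ((1:ℝ)/2)
        = ENNReal.ofReal (2/Real.sqrt ((n:ℝ)+1)) * T n ^ ((1:ℝ)/2) := by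
      rw [ENNReal.mul_rpow_of_nonneg _ _ (by norm_num : (0:ℝ) ≤ 1/2)]
      congr 1
      rw [ENNReal.ofReal_rpow_of_pos (by positivity)]
      congr 1
      rw [← Real.sqrt_eq_rpow]
      rw [show (4:ℝ)/((n:ℝ)+1) = (2/Real.sqrt ((n:ℝ)+1))^2 by
        rw [div_pow, Real.sq_sqrt hn1.le]; norm_num]
      rw [Real.sqrt_sq (by positivity)]
    have hw : ((n : ℝ≥0∞) + 1) ^ (-(1 / 2 : ℝ))
        = ENNReal.ofReal (1/Real.sqrt ((n:ℝ)+1)) := by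
      have e1 : ((n : ℝ≥0∞) + 1) = ENNReal.ofReal ((n:ℝ)+1) := by
        rw [ENNReal.ofReal_add (by positivity) (by norm_num)]
        rw [ENNReal.ofReal_natCast, ENNReal.ofReal_one]
      rw [e1, ENNReal.ofReal_rpow_of_pos hn1]
      congr 1
      rw [Real.rpow_neg hn1.le, ← Real.sqrt_eq_rpow]
      rw [one_div]
    calc ENNReal.ofReal (1/2) * X n
        ≤ ENNReal.ofReal (1/2) * (ENNReal.ofReal (4/((n:ℝ)+1)) * T n) ^ ((1:ℝ)/2) :=
          mul_le_mul_right hmono _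
      _ = ENNReal.ofReal (1/2) * (ENNReal.ofReal (2/Real.sqrt ((n:ℝ)+1)) * T n ^ ((1:ℝ)/2)) := by
          rw [hsplit]
      _ = (ENNReal.ofReal (1/2) * ENNReal.ofReal (2/Real.sqrt ((n:ℝ)+1))) * T n ^ ((1:ℝ)/2) := by
          ring
      _ = ((n : ℝ≥0∞) + 1) ^ (-(1 / 2 : ℝ)) * T n ^ ((1:ℝ)/2) := by
          rw [← ENNReal.ofReal_mul (by norm_num), hw]
          congr 2
          have hs : 0 < Real.sqrt ((n:ℝ)+1) := Real.sqrt_pos.2 hn1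
          field_simp
  -- step 2: summation
  have hsum : ENNReal.ofReal (1/2) * ∑' n, X n
      ≤ ∑' n : ℕ, ((n : ℝ≥0∞) + 1) ^ (-(1 / 2 : ℝ)) * T n ^ ((1 : ℝ) / 2) := by
    rw [← ENNReal.tsum_mul_left]
    exact ENNReal.tsum_le_tsum step1
  -- step 3: antidiagonal swap
  have hswap : ∑' n, X n = ∑' K, (∑ j ∈ Finset.range (K+1), Vw (K-j) j) * a K := by
    have hanti := tsum_antidiag (fun n j => Vw n j * a (n+j))
    simp only [hX]
    rw [hanti]
    refine tsum_congr fun K => ?_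
    rw [Finset.sum_mul]
    refine Finset.sum_congr rfl fun j hj => ?_
    simp only [Finset.mem_range] at hj
    rw [Nat.sub_add_cancel (by omega)]
  -- step 4: lower bound for the antidiagonal weights
  have hW : ∀ K : ℕ, ENNReal.ofReal (Real.sqrt 3)
      ≤ ∑ j ∈ Finset.range (K+1), Vw (K-j) j := by
    intro K
    have hsum_eq : ∑ j ∈ Finset.range (K+1), Vw (K-j) j
        = ENNReal.ofReal (∑ j ∈ Finset.range (K+1), Ur (K-j) j) := by
      rw [ENNReal.ofReal_sum_of_nonneg fun j _ => Ur_nonneg _ _]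
      rfl
    rw [hsum_eq]
    apply ENNReal.ofReal_le_ofReal
    have hkr := key_real (K+1) (by omega)
    calc Real.sqrt 3
        ≤ ∑ j ∈ Finset.range (K+1),
            4 / Real.sqrt (((((K+1:ℕ)):ℝ) + 3*(j:ℝ)) * ((((K+1:ℕ)):ℝ) + 3*(j:ℝ) + 4)) := hkr
      _ = ∑ j ∈ Finset.range (K+1), Ur (K-j) j := by
          refine Finset.sum_congr rfl fun j hj => ?_
          simp only [Finset.mem_range] at hj
          have hjK : j ≤ K := by omega
          unfold Ur
          have e : ((K-j:ℕ):ℝ) = (K:ℝ) - (j:ℝ) := by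
            rw [Nat.cast_sub hjK]
          congr 2 <;> (rw [e]; push_cast; ring)
  -- step 5: conclude
  have hfinal : ENNReal.ofReal (Real.sqrt 3/2) * (∑' k, a k)
      ≤ ∑' n : ℕ, ((n : ℝ≥0∞) + 1) ^ (-(1 / 2 : ℝ)) * T n ^ ((1 : ℝ) / 2) := by
    calc ENNReal.ofReal (Real.sqrt 3/2) * (∑' k, a k)
        = ENNReal.ofReal (1/2) * (ENNReal.ofReal (Real.sqrt 3) * ∑' k, a k) := by
          rw [← mul_assoc, ← ENNReal.ofReal_mul (by norm_num)]
          congr 2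
          ring
      _ = ENNReal.ofReal (1/2) * ∑' K, ENNReal.ofReal (Real.sqrt 3) * a K := by
          rw [ENNReal.tsum_mul_left]
      _ ≤ ENNReal.ofReal (1/2) * ∑' K, (∑ j ∈ Finset.range (K+1), Vw (K-j) j) * a K := by
          refine mul_le_mul_right (ENNReal.tsum_le_tsum fun K => ?_) _
          exact mul_le_mul_left (hW K) _
      _ = ENNReal.ofReal (1/2) * ∑' n, X n := by rw [hswap]
      _ ≤ _ := hsum
  have hone : ENNReal.ofReal (2/Real.sqrt 3) * ENNReal.ofReal (Real.sqrt 3/2) = 1 := by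
    have hs : 0 < Real.sqrt 3 := Real.sqrt_pos.2 (by norm_num)
    rw [← ENNReal.ofReal_mul (by positivity)]
    rw [show (2/Real.sqrt 3) * (Real.sqrt 3/2) = 1 by field_simp]
    exact ENNReal.ofReal_one
  calc (∑' k, a k) = 1 * (∑' k, a k) := (one_mul _).symm
    _ = ENNReal.ofReal (2/Real.sqrt 3) * (ENNReal.ofReal (Real.sqrt 3/2) * (∑' k, a k)) := by
        rw [← mul_assoc, hone]
    _ ≤ ENNReal.ofReal (2/Real.sqrt 3) *
        (∑' n : ℕ, ((n : ℝ≥0∞) + 1) ^ (-(1 / 2 : ℝ)) * T n ^ ((1 : ℝ) / 2)) :=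
        mul_le_mul_right hfinal _


lemma w_eq (n : ℕ) : ((n : ℝ≥0∞) + 1) ^ (-(1 / 2 : ℝ))
    = ENNReal.ofReal (1/Real.sqrt ((n:ℝ)+1)) := by
  have hn1 : (0:ℝ) < (n:ℝ)+1 := by positivity
  have e1 : ((n : ℝ≥0∞) + 1) = ENNReal.ofReal ((n:ℝ)+1) := by
    rw [ENNReal.ofReal_add (by positivity) (by norm_num)]
    rw [ENNReal.ofReal_natCast, ENNReal.ofReal_one]
  rw [e1, ENNReal.ofReal_rpow_of_pos hn1]
  congr 1
  rw [Real.rpow_neg hn1.le, ← Real.sqrt_eq_rpow]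
  rw [one_div]

lemma indicator_tsum (m : ℕ) (x : ℝ≥0∞) :
    ∑' j : ℕ, (if j ≤ m then x else 0) = ((m:ℝ≥0∞) + 1) * x := by
  rw [tsum_eq_sum (s := Finset.range (m+1)) ?_]
  · rw [Finset.sum_congr rfl (fun j hj => if_pos (by
      simp only [Finset.mem_range] at hj; omega))]
    rw [Finset.sum_const, Finset.card_range, nsmul_eq_mul]
    congr 1
    push_cast
    ring
  · intro j hj
    simp only [Finset.mem_range] at hj
    rw [if_neg (by omega)]

lemma lower (a : ℕ → ℝ≥0∞) (ha : Antitone a) :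
    (1 / 2 : ℝ≥0∞) * (∑' n : ℕ, ((n : ℝ≥0∞) + 1) ^ (-(1 / 2 : ℝ)) *
        (∑' k : ℕ, a (n + k) ^ (2 : ℝ)) ^ ((1 : ℝ) / 2)) ≤ ∑' k : ℕ, a k := by
  by_cases hfin : (∑' k : ℕ, a k) = ⊤
  · rw [hfin]; exact le_top
  have htend : Tendsto a atTop (nhds 0) := ENNReal.tendsto_atTop_zero_of_tsum_ne_top hfin
  set c : ℕ → ℝ≥0∞ := fun N => a N - a (N+1) with hcdef
  -- partial sums of c telescope
  have hpartial : ∀ k J, ∑ t ∈ Finset.range J, c (k+t) = a k - a (k+J) := by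
    intro k J
    induction J with
    | zero => simp
    | succ J ih =>
      rw [Finset.sum_range_succ, ih]
      have h1 : a (k+J) ≤ a k := ha (by omega)
      have h2 : a (k+J+1) ≤ a (k+J) := ha (by omega)
      have e : k + (J+1) = k+J+1 := by ring
      rw [e]
      exact tsub_add_tsub_cancel h1 h2
  -- the tsum of c recovers a
  have hc : ∀ k, ∑' t, c (k+t) = a k := by
    intro k
    rw [ENNReal.tsum_eq_iSup_nat]
    have e : ∀ J : ℕ, ∑ t ∈ Finset.range J, c (k+t) = a k - a (k+J) := hpartial k
    rw [iSup_congr e, ← ENNReal.sub_iInf]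
    have hinf : ⨅ J : ℕ, a (k+J) = 0 := by
      have hmono : Antitone (fun J => a (k+J)) := fun i j hij => ha (by omega)
      have htend2 : Tendsto (fun J => a (k+J)) atTop (nhds 0) := by
        have h0 := htend.comp (tendsto_add_atTop_nat k)
        have : ((fun n => a n) ∘ (fun n => n + k)) = fun J => a (k+J) := by
          funext J
          simp [Nat.add_comm]
        rwa [this] at h0
      exact tendsto_nhds_unique (tendsto_atTop_iInf hmono) htend2
    rw [hinf, tsub_zero]
  -- main objects
  set q : ℕ → ℝ≥0∞ := fun t => ENNReal.ofReal (Real.sqrt ((t:ℝ)+1)) with hqdef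
  set D : ℕ → ℝ≥0∞ := fun n => ∑' t, q t * c (n+t) with hDdef
  set T : ℕ → ℝ≥0∞ := fun n => ∑' k : ℕ, a (n + k) ^ (2 : ℝ) with hTdef
  -- min bound : (min t s + 1) ≤ q t * q s
  have hqmin : ∀ t s : ℕ, (((min t s : ℕ) : ℝ≥0∞) + 1) ≤ q t * q s := by
    intro t s
    have hmono : ∀ u v : ℕ, u ≤ v → q u ≤ q v := by
      intro u v huv
      apply ENNReal.ofReal_le_ofReal
      apply Real.sqrt_le_sqrt
      have : (u:ℝ) ≤ (v:ℝ) := by exact_mod_cast huv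
      linarith
    have hqq : q (min t s) * q (min t s) = (((min t s : ℕ) : ℝ≥0∞) + 1) := by
      rw [hqdef]
      simp only []
      rw [← ENNReal.ofReal_mul (Real.sqrt_nonneg _)]
      rw [Real.mul_self_sqrt (by positivity)]
      rw [ENNReal.ofReal_add (by positivity) (by norm_num)]
      rw [ENNReal.ofReal_natCast, ENNReal.ofReal_one]
    calc (((min t s : ℕ) : ℝ≥0∞) + 1) = q (min t s) * q (min t s) := hqq.symm
      _ ≤ q t * q s :=
        mul_le_mul' (hmono _ _ (min_le_left t s)) (hmono _ _ (min_le_right t s))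
  -- T n ≤ D n ^ 2
  have hTD : ∀ n, T n ≤ D n ^ 2 := by
    intro n
    have ha2 : ∀ j : ℕ, a (n + j) ^ (2:ℝ) = a (n+j) * a (n+j) := by
      intro j
      rw [show (2:ℝ) = ((2:ℕ):ℝ) by norm_num, ENNReal.rpow_natCast, pow_two]
    have hatail : ∀ j : ℕ, a (n+j) = ∑' t, (if j ≤ t then c (n+t) else 0) := by
      intro j
      rw [← tsum_tail (fun t => c (n + t)) j]
      rw [← hc (n+j)]
      exact tsum_congr fun u => by congr 1; omega
    have hTexp : T n = ∑' t, ∑' s, (((min t s : ℕ) : ℝ≥0∞) + 1) * (c (n+t) * c (n+s)) := by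
      calc T n = ∑' j, a (n+j) * a (n+j) := tsum_congr fun j => ha2 j
        _ = ∑' (j : ℕ), ∑' (t : ℕ), ∑' (s : ℕ),
              (if j ≤ t then c (n+t) else 0) * (if j ≤ s then c (n+s) else 0) := by
            refine tsum_congr fun j => ?_
            rw [hatail j, tsum_mul_tsum]
        _ = ∑' (t : ℕ), ∑' (s : ℕ), ∑' (j : ℕ),
              (if j ≤ t then c (n+t) else 0) * (if j ≤ s then c (n+s) else 0) := by
            rw [ENNReal.tsum_comm (f := fun j t => ∑' (s : ℕ),
              (if j ≤ t then c (n+t) else 0) * (if j ≤ s then c (n+s) else 0))]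
            exact tsum_congr fun t => ENNReal.tsum_comm
        _ = ∑' t, ∑' s, (((min t s : ℕ) : ℝ≥0∞) + 1) * (c (n+t) * c (n+s)) := by
            refine tsum_congr fun t => tsum_congr fun s => ?_
            have e : ∀ j : ℕ, (if j ≤ t then c (n+t) else 0) * (if j ≤ s then c (n+s) else 0)
                = (if j ≤ min t s then c (n+t) * c (n+s) else 0) := by
              intro j
              by_cases h1 : j ≤ t <;> by_cases h2 : j ≤ s <;>
                simp [h1, h2, le_min_iff] <;> omega
            rw [tsum_congr e, indicator_tsum]
    have hDexp : D n ^ 2 = ∑' t, ∑' s, (q t * q s) * (c (n+t) * c (n+s)) := by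
      rw [pow_two, hDdef]
      simp only []
      rw [tsum_mul_tsum]
      exact tsum_congr fun t => tsum_congr fun s => by ring
    rw [hTexp, hDexp]
    exact ENNReal.tsum_le_tsum fun t => ENNReal.tsum_le_tsum fun s =>
      mul_le_mul_left (hqmin t s) _
  -- pass to square roots : T n ^ (1/2) ≤ D n
  have hsqrt : ∀ n, T n ^ ((1:ℝ)/2) ≤ D n := by
    intro n
    calc T n ^ ((1:ℝ)/2) ≤ (D n ^ 2) ^ ((1:ℝ)/2) :=
        ENNReal.rpow_le_rpow (hTD n) (by norm_num)
      _ = D n := by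
        rw [← ENNReal.rpow_natCast (D n) 2, ← ENNReal.rpow_mul]
        norm_num
  -- bound S
  have hS : (∑' n : ℕ, ((n : ℝ≥0∞) + 1) ^ (-(1 / 2 : ℝ)) * T n ^ ((1 : ℝ) / 2))
      ≤ ∑' (n : ℕ), ∑' (t : ℕ), (((n : ℝ≥0∞) + 1) ^ (-(1 / 2 : ℝ)) * q t) * c (n+t) := by
    refine ENNReal.tsum_le_tsum fun n => ?_
    calc ((n : ℝ≥0∞) + 1) ^ (-(1 / 2 : ℝ)) * T n ^ ((1 : ℝ) / 2)
        ≤ ((n : ℝ≥0∞) + 1) ^ (-(1 / 2 : ℝ)) * D n := mul_le_mul_right (hsqrt n) _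
      _ = ∑' (t : ℕ), (((n : ℝ≥0∞) + 1) ^ (-(1 / 2 : ℝ)) * q t) * c (n+t) := by
          rw [hDdef]
          simp only []
          rw [← ENNReal.tsum_mul_left]
          exact tsum_congr fun t => by ring
  -- antidiagonal swap
  have hswap : (∑' (n : ℕ), ∑' (t : ℕ), (((n : ℝ≥0∞) + 1) ^ (-(1 / 2 : ℝ)) * q t) * c (n+t))
      = ∑' (K : ℕ), (∑ j ∈ Finset.range (K+1),
          (((K-j : ℕ) : ℝ≥0∞) + 1) ^ (-(1 / 2 : ℝ)) * q j) * c K := by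
    rw [tsum_antidiag (fun n t => (((n : ℝ≥0∞) + 1) ^ (-(1 / 2 : ℝ)) * q t) * c (n+t))]
    refine tsum_congr fun K => ?_
    rw [Finset.sum_mul]
    refine Finset.sum_congr rfl fun j hj => ?_
    simp only [Finset.mem_range] at hj
    rw [Nat.sub_add_cancel (by omega)]
  -- bound the antidiagonal weights
  have hE : ∀ K : ℕ, (∑ j ∈ Finset.range (K+1),
      (((K-j : ℕ) : ℝ≥0∞) + 1) ^ (-(1 / 2 : ℝ)) * q j) ≤ 2 * ((K : ℝ≥0∞) + 1) := by
    intro K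
    have hterm : ∀ j ∈ Finset.range (K+1),
        (((K-j : ℕ) : ℝ≥0∞) + 1) ^ (-(1 / 2 : ℝ)) * q j
          = ENNReal.ofReal (Real.sqrt ((j:ℝ)+1) / Real.sqrt (((K-j:ℕ):ℝ)+1)) := by
      intro j _
      rw [w_eq (K-j), hqdef]
      simp only []
      rw [← ENNReal.ofReal_mul (by positivity)]
      congr 1
      ring
    rw [Finset.sum_congr rfl hterm]
    rw [← ENNReal.ofReal_sum_of_nonneg (fun j _ => by positivity)]
    calc ENNReal.ofReal (∑ j ∈ Finset.range (K+1),
          Real.sqrt ((j:ℝ)+1) / Real.sqrt (((K-j:ℕ):ℝ)+1))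
        ≤ ENNReal.ofReal (2*((K:ℝ)+1)) := ENNReal.ofReal_le_ofReal (sum_ratio_le K)
      _ = 2 * ((K : ℝ≥0∞) + 1) := by
          rw [ENNReal.ofReal_mul (by norm_num)]
          congr 1
          · norm_num
          · rw [ENNReal.ofReal_add (by positivity) (by norm_num)]
            rw [ENNReal.ofReal_natCast, ENNReal.ofReal_one]
  -- sum of (K+1) * c K equals sum of a
  have hsum_c : ∑' (K : ℕ), ((K : ℝ≥0∞) + 1) * c K = ∑' i, a i := by
    have e1 : ∀ K : ℕ, ((K : ℝ≥0∞) + 1) * c K = ∑' i : ℕ, (if i ≤ K then c K else 0) :=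
      fun K => (indicator_tsum K (c K)).symm
    rw [tsum_congr e1]
    rw [ENNReal.tsum_comm (f := fun K i => if i ≤ K then c K else 0)]
    refine tsum_congr fun i => ?_
    rw [← tsum_tail c i]
    exact hc i
  -- put everything together
  have hfinal : (∑' n : ℕ, ((n : ℝ≥0∞) + 1) ^ (-(1 / 2 : ℝ)) * T n ^ ((1 : ℝ) / 2))
      ≤ 2 * ∑' i, a i := by
    calc (∑' n : ℕ, ((n : ℝ≥0∞) + 1) ^ (-(1 / 2 : ℝ)) * T n ^ ((1 : ℝ) / 2))
        ≤ ∑' (n : ℕ), ∑' (t : ℕ), (((n : ℝ≥0∞) + 1) ^ (-(1 / 2 : ℝ)) * q t) * c (n+t) := hS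
      _ = ∑' (K : ℕ), (∑ j ∈ Finset.range (K+1),
            (((K-j : ℕ) : ℝ≥0∞) + 1) ^ (-(1 / 2 : ℝ)) * q j) * c K := hswap
      _ ≤ ∑' (K : ℕ), (2 * ((K : ℝ≥0∞) + 1)) * c K :=
          ENNReal.tsum_le_tsum fun K => mul_le_mul_left (hE K) _
      _ = 2 * ∑' (K : ℕ), ((K : ℝ≥0∞) + 1) * c K := by
          rw [← ENNReal.tsum_mul_left]
          exact tsum_congr fun K => by ring
      _ = 2 * ∑' i, a i := by rw [hsum_c]
  calc (1 / 2 : ℝ≥0∞) * (∑' n : ℕ, ((n : ℝ≥0∞) + 1) ^ (-(1 / 2 : ℝ)) *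
        T n ^ ((1 : ℝ) / 2))
      ≤ (1 / 2 : ℝ≥0∞) * (2 * ∑' i, a i) := mul_le_mul_right hfinal _
    _ = ∑' i, a i := by
        rw [← mul_assoc]
        rw [show (1/2 : ℝ≥0∞) * 2 = 1 by
          rw [one_div, ENNReal.inv_mul_cancel (by norm_num) (by norm_num)]]
        rw [one_mul]

end StechkinAux

open scoped ENNReal

/-- Stechkin's lemma: for a non-increasing sequence of nonnegative (extended real) numbers
`a_1 ≥ a_2 ≥ ⋯` (here `a n` stands for `a_{n+1}`),
`(1/2) ∑_{n=1}^∞ n^{-1/2} (∑_{k=n}^∞ a_k^2)^{1/2} ≤ ∑_{k=1}^∞ a_k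
  ≤ (2/√3) ∑_{n=1}^∞ n^{-1/2} (∑_{k=n}^∞ a_k^2)^{1/2}`,
where both sides may simultaneously be infinite. -/
theorem stmt2 (a : ℕ → ℝ≥0∞) (ha : Antitone a) :
    (1 / 2) * (∑' n : ℕ, ((n : ℝ≥0∞) + 1) ^ (-(1 / 2 : ℝ)) *
        (∑' k : ℕ, a (n + k) ^ (2 : ℝ)) ^ ((1 : ℝ) / 2)) ≤ ∑' k : ℕ, a k ∧
    (∑' k : ℕ, a k) ≤ ENNReal.ofReal (2 / Real.sqrt 3) *
      (∑' n : ℕ, ((n : ℝ≥0∞) + 1) ^ (-(1 / 2 : ℝ)) *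
        (∑' k : ℕ, a (n + k) ^ (2 : ℝ)) ^ ((1 : ℝ) / 2)) :=
  ⟨StechkinAux.lower a ha, StechkinAux.upper a⟩
end

section
/- (Rudin–Shapiro polynomials) For any natural number N there exist signs ε_k ∈ {−1, +1}, |k| ≤ N, such that the trigonometric polynomial ℛ_N(x) = ∑_{|k| ≤ N} ε_k e^{ikx} satisfies ‖ℛ_N‖_∞ ≤ C N^{1/2} with an absolute constant C. -/
open Finset Complex

/-- Rudin–Shapiro coefficient pair sequences. -/
def rsPQ : ℕ → (ℕ → ℝ) × (ℕ → ℝ)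
  | 0 => (fun _ => 1, fun _ => 1)
  | (n+1) =>
    (fun k => if k < 2^n then (rsPQ n).1 k else (rsPQ n).2 (k - 2^n),
     fun k => if k < 2^n then (rsPQ n).1 k else -(rsPQ n).2 (k - 2^n))

lemma rsPQ_vals (n : ℕ) : ∀ k, ((rsPQ n).1 k = 1 ∨ (rsPQ n).1 k = -1)
    ∧ ((rsPQ n).2 k = 1 ∨ (rsPQ n).2 k = -1) := by
  induction n with
  | zero => intro k; simp [rsPQ]
  | succ n ih =>
    intro k
    simp only [rsPQ]
    constructor
    · by_cases h : k < 2^n <;> simp [h, (ih _).1, (ih _).2]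
    · by_cases h : k < 2^n
      · simp [h, (ih _).1]
      · simp only [h, if_false]
        rcases (ih (k - 2^n)).2 with h' | h' <;> simp [h']

noncomputable def Pp (n : ℕ) (x : ℝ) : ℂ :=
  ∑ k ∈ range (2^n), ((rsPQ n).1 k : ℂ) * Complex.exp ((k : ℂ) * (x : ℂ) * Complex.I)

noncomputable def Qp (n : ℕ) (x : ℝ) : ℂ :=
  ∑ k ∈ range (2^n), ((rsPQ n).2 k : ℂ) * Complex.exp ((k : ℂ) * (x : ℂ) * Complex.I)

lemma exp_norm_one {z : ℂ} (hz : z.im = 0) (x : ℝ) :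
    ‖Complex.exp (z * (x : ℂ) * Complex.I)‖ = 1 := by
  rw [Complex.norm_exp]
  have : (z * (x : ℂ) * Complex.I).re = 0 := by
    simp [Complex.mul_I_re, Complex.mul_im, hz]
  rw [this, Real.exp_zero]

lemma rs_rec (n : ℕ) (x : ℝ) :
    Pp (n+1) x = Pp n x + Complex.exp (((2^n : ℕ) : ℂ) * (x : ℂ) * Complex.I) * Qp n x
    ∧ Qp (n+1) x = Pp n x - Complex.exp (((2^n : ℕ) : ℂ) * (x : ℂ) * Complex.I) * Qp n x := by
  have hsplit : ∀ f : ℕ → ℝ, ∑ k ∈ range (2^(n+1)), (f k : ℂ) * Complex.exp ((k : ℂ) * x * Complex.I)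
      = ∑ k ∈ range (2^n), (f k : ℂ) * Complex.exp ((k : ℂ) * x * Complex.I)
        + Complex.exp (((2^n : ℕ) : ℂ) * x * Complex.I) *
          ∑ j ∈ range (2^n), (f (2^n + j) : ℂ) * Complex.exp ((j : ℂ) * x * Complex.I) := by
    intro f
    have h2 : 2^(n+1) = 2^n + 2^n := by ring
    rw [h2, Finset.sum_range_add, Finset.mul_sum]
    congr 1
    apply Finset.sum_congr rfl
    intro j _
    have harg : ((2^n + j : ℕ) : ℂ) * x * Complex.I
        = ((2^n : ℕ) : ℂ) * x * Complex.I + (j : ℂ) * x * Complex.I := by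
      push_cast; ring
    rw [harg, Complex.exp_add]; ring
  have e1 : (∑ k ∈ range (2^n), (((rsPQ (n+1)).1 k : ℝ) : ℂ) * Complex.exp ((k:ℂ) * x * Complex.I)) = Pp n x := by
    apply Finset.sum_congr rfl; intro k hk
    simp only [rsPQ, Finset.mem_range.mp hk, if_true]
  have e1' : (∑ k ∈ range (2^n), (((rsPQ (n+1)).2 k : ℝ) : ℂ) * Complex.exp ((k:ℂ) * x * Complex.I)) = Pp n x := by
    apply Finset.sum_congr rfl; intro k hk
    simp only [rsPQ, Finset.mem_range.mp hk, if_true]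
  have e2 : (∑ j ∈ range (2^n), (((rsPQ (n+1)).1 (2^n+j) : ℝ) : ℂ) * Complex.exp ((j:ℂ) * x * Complex.I)) = Qp n x := by
    apply Finset.sum_congr rfl; intro j hj
    have h : ¬ (2^n + j < 2^n) := by omega
    simp only [rsPQ, h, if_false, Nat.add_sub_cancel_left]
  have e2' : (∑ j ∈ range (2^n), (((rsPQ (n+1)).2 (2^n+j) : ℝ) : ℂ) * Complex.exp ((j:ℂ) * x * Complex.I)) = -Qp n x := by
    rw [Qp, ← Finset.sum_neg_distrib]
    apply Finset.sum_congr rfl; intro j hj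
    have h : ¬ (2^n + j < 2^n) := by omega
    simp only [rsPQ, h, if_false, Nat.add_sub_cancel_left]
    push_cast; ring
  constructor
  · show (∑ k ∈ range (2^(n+1)), (((rsPQ (n+1)).1 k : ℝ) : ℂ) * Complex.exp ((k:ℂ) * x * Complex.I)) = _
    rw [hsplit, e1, e2]
  · show (∑ k ∈ range (2^(n+1)), (((rsPQ (n+1)).2 k : ℝ) : ℂ) * Complex.exp ((k:ℂ) * x * Complex.I)) = _
    rw [hsplit, e1', e2']; ring

lemma rs_sq (n : ℕ) (x : ℝ) : ‖Pp n x‖^2 + ‖Qp n x‖^2 = 2^(n+1) := by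
  induction n with
  | zero =>
    simp [Pp, Qp, rsPQ, exp_norm_one (by simp : ((0:ℕ):ℂ).im = 0) x]
    norm_num
  | succ n ih =>
    obtain ⟨h1, h2⟩ := rs_rec n x
    rw [h1, h2]
    have hp := parallelogram_law_with_norm ℝ (Pp n x)
      (Complex.exp (((2^n : ℕ) : ℂ) * (x : ℂ) * Complex.I) * Qp n x)
    rw [hp, norm_mul, exp_norm_one (z := ((2^n : ℕ) : ℂ)) (Complex.natCast_im _) x, one_mul, ih]
    ring

lemma Pp_bound (n : ℕ) (x : ℝ) : ‖Pp n x‖ ≤ Real.sqrt 2 * Real.sqrt (2^n) := by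
  have h := rs_sq n x
  have h1 : ‖Pp n x‖^2 ≤ 2^(n+1) := by nlinarith [sq_nonneg ‖Qp n x‖]
  have h2 : ‖Pp n x‖ ≤ Real.sqrt (2^(n+1)) := by
    rw [← Real.sqrt_sq (norm_nonneg (Pp n x))]
    exact Real.sqrt_le_sqrt h1
  calc ‖Pp n x‖ ≤ Real.sqrt (2^(n+1)) := h2
    _ = Real.sqrt 2 * Real.sqrt (2^n) := by
        rw [pow_succ, Real.sqrt_mul (by positivity)]; ring

lemma exists_eta (m : ℕ) : ∃ η : ℕ → ℝ, (∀ k, η k = 1 ∨ η k = -1) ∧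
    ∀ x : ℝ, ‖∑ k ∈ range m, (η k : ℂ) * Complex.exp ((k : ℂ) * (x:ℂ) * Complex.I)‖
      ≤ 10 * Real.sqrt m := by
  induction m using Nat.strong_induction_on with
  | _ m ih =>
    rcases Nat.eq_zero_or_pos m with rfl | hm
    · exact ⟨fun _ => 1, fun _ => Or.inl rfl, by simp⟩
    · set n := Nat.log 2 m with hn
      have h1 : 2^n ≤ m := Nat.pow_log_le_self 2 (by omega)
      have h2 : m < 2^(n+1) := Nat.lt_pow_succ_log_self (by norm_num) m
      have hpow : (1:ℕ) ≤ 2^n := Nat.one_le_two_pow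
      obtain ⟨η', hv', hb'⟩ := ih (m - 2^n) (by omega)
      refine ⟨fun k => if k < 2^n then (rsPQ n).1 k else η' (k - 2^n), ?_, ?_⟩
      · intro k; by_cases h : k < 2^n
        · simpa [h] using (rsPQ_vals n k).1
        · simpa [h] using hv' (k - 2^n)
      · intro x
        have hmeq : m = 2^n + (m - 2^n) := by omega
        rw [hmeq, Finset.sum_range_add]
        have e1 : (∑ k ∈ range (2^n),
            ((if k < 2^n then (rsPQ n).1 k else η' (k - 2^n) : ℝ) : ℂ)
              * Complex.exp ((k:ℂ) * x * Complex.I)) = Pp n x := by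
          apply Finset.sum_congr rfl; intro k hk
          simp [Finset.mem_range.mp hk]
        have e2 : (∑ j ∈ range (m - 2^n),
            ((if 2^n + j < 2^n then (rsPQ n).1 (2^n + j) else η' (2^n + j - 2^n) : ℝ) : ℂ)
              * Complex.exp (((2^n + j : ℕ):ℂ) * x * Complex.I))
            = Complex.exp (((2^n : ℕ) : ℂ) * x * Complex.I) *
              ∑ j ∈ range (m - 2^n), (η' j : ℂ) * Complex.exp ((j:ℂ) * x * Complex.I) := by
          rw [Finset.mul_sum]
          apply Finset.sum_congr rfl; intro j hj
          have h : ¬ (2^n + j < 2^n) := by omega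
          have harg : ((2^n + j : ℕ) : ℂ) * x * Complex.I
              = ((2^n : ℕ) : ℂ) * x * Complex.I + (j : ℂ) * x * Complex.I := by
            push_cast; ring
          simp only [h, if_false, Nat.add_sub_cancel_left, harg, Complex.exp_add]
          ring
        rw [e1, e2]
        have b1 := Pp_bound n x
        have b2 := hb' x
        have bnorm : ‖Pp n x + Complex.exp (((2^n : ℕ) : ℂ) * x * Complex.I) *
              ∑ j ∈ range (m - 2^n), (η' j : ℂ) * Complex.exp ((j:ℂ) * x * Complex.I)‖
            ≤ Real.sqrt 2 * Real.sqrt (2^n) + 10 * Real.sqrt (m - 2^n : ℕ) := by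
          refine (norm_add_le _ _).trans ?_
          gcongr
          rw [norm_mul, exp_norm_one (z := ((2^n : ℕ) : ℂ)) (Complex.natCast_im _) x, one_mul]
          exact b2
        refine bnorm.trans ?_
        have s1 : Real.sqrt ((2:ℝ)^n) ≤ Real.sqrt m := by
          apply Real.sqrt_le_sqrt; exact_mod_cast h1
        have s2 : Real.sqrt ((m - 2^n : ℕ) : ℝ) ≤ Real.sqrt m / Real.sqrt 2 := by
          rw [← Real.sqrt_div (by positivity)]
          apply Real.sqrt_le_sqrt
          have : 2 * (m - 2^n) ≤ m := by omega
          have := (Nat.cast_le (α := ℝ)).mpr this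
          push_cast at this ⊢
          linarith
        have hs2 : Real.sqrt 2 ^ 2 = 2 := Real.sq_sqrt (by norm_num)
        have hs2' : (1:ℝ) ≤ Real.sqrt 2 := by
          nlinarith [Real.sqrt_nonneg 2]
        have hd : Real.sqrt m / Real.sqrt 2 = Real.sqrt m * Real.sqrt 2 / 2 := by
          rw [div_eq_div_iff (by positivity) (by norm_num)]
          nlinarith [Real.sqrt_nonneg m]
        rw [show 2^n + (m - 2^n) = m from hmeq.symm]
        have hsm : Real.sqrt 2 ≤ 5/3 := by nlinarith [sq_nonneg (Real.sqrt 2 - 5/3)]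
        have key : 6 * Real.sqrt 2 * Real.sqrt m ≤ 10 * Real.sqrt m := by
          nlinarith [Real.sqrt_nonneg (m:ℝ)]
        nlinarith [Real.sqrt_nonneg (m:ℝ), Real.sqrt_nonneg 2,
          mul_le_mul_of_nonneg_left s1 (Real.sqrt_nonneg 2),
          mul_le_mul_of_nonneg_left s2 (by norm_num : (0:ℝ) ≤ 10)]

/-- Rudin–Shapiro polynomials: there is an absolute constant `C` such that for any
natural number `N ≥ 1` there exist signs `ε_k ∈ {-1, +1}`, `|k| ≤ N`, with
`‖∑_{|k| ≤ N} ε_k e^{ikx}‖_∞ ≤ C N^{1/2}`. -/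
theorem stmt11 : ∃ C : ℝ, 0 < C ∧ ∀ N : ℕ, 1 ≤ N →
    ∃ ε : ℤ → ℝ, (∀ k : ℤ, |k| ≤ (N : ℤ) → ε k = 1 ∨ ε k = -1) ∧
      ∀ x : ℝ, ‖(∑ k ∈ Finset.Icc (-(N : ℤ)) (N : ℤ),
          (ε k : ℂ) * Complex.exp ((k : ℂ) * (x : ℂ) * Complex.I))‖ ≤
        C * Real.sqrt N := by
  refine ⟨20, by norm_num, fun N hN => ?_⟩
  obtain ⟨η, hv, hb⟩ := exists_eta (2*N+1)
  refine ⟨fun k => η (k + N).toNat, fun k _ => hv _, fun x => ?_⟩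
  let emb : ℕ ↪ ℤ := ⟨fun j => (j:ℤ) - (N:ℤ), by intro a b h; dsimp only at h; omega⟩
  have hmap : (Finset.range (2*N+1)).map emb = Finset.Icc (-(N:ℤ)) (N:ℤ) := by
    ext k
    simp only [Finset.mem_map, Finset.mem_range, Finset.mem_Icc, emb,
      Function.Embedding.coeFn_mk]
    constructor
    · rintro ⟨j, hj, rfl⟩; change -(N:ℤ) ≤ (j:ℤ) - N ∧ (j:ℤ) - N ≤ N; omega
    · intro hk; exact ⟨(k + N).toNat, by omega, by show ((k + N).toNat : ℤ) - N = k; omega⟩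
  rw [← hmap, Finset.sum_map]
  have heq : ∀ j ∈ Finset.range (2*N+1),
      ((fun k : ℤ => η (k + N).toNat) (emb j) : ℂ) *
        Complex.exp (((emb j : ℤ) : ℂ) * (x : ℂ) * Complex.I)
      = Complex.exp ((-(N:ℤ) : ℂ) * (x : ℂ) * Complex.I) *
        ((η j : ℂ) * Complex.exp ((j : ℂ) * (x : ℂ) * Complex.I)) := by
    intro j hj
    show ((η (((j:ℤ) - N) + N).toNat : ℝ) : ℂ) *
        Complex.exp ((((j:ℤ) - N : ℤ) : ℂ) * (x : ℂ) * Complex.I) = _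
    have h1 : ((j:ℤ) - N + N).toNat = j := by omega
    have h2 : (((j:ℤ) - N : ℤ) : ℂ) * x * Complex.I
        = (-(N:ℤ) : ℂ) * x * Complex.I + (j : ℂ) * x * Complex.I := by
      push_cast; ring
    rw [h1, h2, Complex.exp_add]; ring
  rw [Finset.sum_congr rfl heq, ← Finset.mul_sum, norm_mul,
    exp_norm_one (z := -(((N:ℕ):ℤ):ℂ)) (by simp) x, one_mul]
  refine (hb x).trans ?_
  have h4 : ((2*N+1 : ℕ) : ℝ) ≤ 4 * N := by
    push_cast
    have : (1:ℝ) ≤ N := by exact_mod_cast hN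
    linarith
  have hs : Real.sqrt ((2*N+1 : ℕ) : ℝ) ≤ 2 * Real.sqrt N := by
    refine (Real.sqrt_le_sqrt h4).trans ?_
    rw [show (4 : ℝ) * N = (2:ℝ)^2 * N by norm_num, Real.sqrt_mul (by positivity),
      Real.sqrt_sq (by norm_num)]
  linarith [Real.sqrt_nonneg ((2*N+1 : ℕ) : ℝ), hs]
end

section
/- The cardinality of the hyperbolic cross Γ(N) := {k ∈ ℤ^d : ∏_{j=1}^d max{|k_j|, 1} ≤ N} satisfies |Γ(N)| ≍ N (log N)^{d-1} for N ≥ 2, with constants depending only on d. -/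
open Finset
def hcp (d N : ℕ) : Finset (Fin d → ℕ) :=
  (Fintype.piFinset fun _ : Fin d => Finset.Icc 1 N).filter fun k => (∏ j, k j) ≤ N

lemma mem_hcp {d N : ℕ} {k : Fin d → ℕ} :
    k ∈ hcp d N ↔ (∀ j, 1 ≤ k j) ∧ (∏ j, k j) ≤ N := by
  simp only [hcp, Finset.mem_filter, Fintype.mem_piFinset, Finset.mem_Icc]
  constructor
  · rintro ⟨h1, h2⟩; exact ⟨fun j => (h1 j).1, h2⟩
  · rintro ⟨h1, h2⟩
    refine ⟨fun j => ⟨h1 j, ?_⟩, h2⟩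
    calc k j ≤ ∏ i, k i := Finset.single_le_prod' (fun i _ => h1 i) (Finset.mem_univ j)
    _ ≤ N := h2

lemma hcp_rec (d N : ℕ) :
    (hcp (d+1) N).card = ∑ m ∈ Finset.Icc 1 N, (hcp d (N / m)).card := by
  rw [Finset.card_eq_sum_card_fiberwise (f := fun k => k 0) (t := Finset.Icc 1 N)]
  · refine Finset.sum_congr rfl fun m hm => ?_
    have hm1 : 1 ≤ m := (Finset.mem_Icc.mp hm).1
    refine Finset.card_bij (fun k _ => Fin.tail k) ?_ ?_ ?_
    · rintro k hk
      simp only [Finset.mem_filter] at hk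
      obtain ⟨hk, hk0⟩ := hk
      rw [mem_hcp] at hk ⊢
      obtain ⟨h1, h2⟩ := hk
      refine ⟨fun j => h1 j.succ, ?_⟩
      rw [Nat.le_div_iff_mul_le hm1, mul_comm]
      calc m * ∏ j, Fin.tail k j = k 0 * ∏ j, Fin.tail k j := by rw [hk0]
        _ = ∏ j, k j := (Fin.prod_univ_succ k).symm
        _ ≤ N := h2
    · rintro k hk k' hk' h
      simp only [Finset.mem_filter] at hk hk'
      funext j
      rcases Fin.eq_zero_or_eq_succ j with rfl | ⟨i, rfl⟩
      · rw [hk.2, hk'.2]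
      · exact congrFun h i
    · rintro k hk
      refine ⟨Fin.cons m k, ?_, ?_⟩
      · rw [mem_hcp] at hk
        simp only [Finset.mem_filter]
        constructor
        · rw [mem_hcp]
          refine ⟨fun j => ?_, ?_⟩
          · rcases Fin.eq_zero_or_eq_succ j with rfl | ⟨i, rfl⟩
            · simpa using hm1
            · simpa using hk.1 i
          · rw [Fin.prod_univ_succ]
            simp only [Fin.cons_zero, Fin.cons_succ]
            have := hk.2
            rw [Nat.le_div_iff_mul_le hm1] at this
            calc m * ∏ j, k j = (∏ j, k j) * m := mul_comm _ _
              _ ≤ N := this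
        · simp
      · simp [Fin.tail_cons]
  · rintro k hk
    rw [Finset.mem_coe, mem_hcp] at hk
    rw [Finset.mem_coe, Finset.mem_Icc]
    refine ⟨hk.1 0, ?_⟩
    calc k 0 ≤ ∏ i, k i := Finset.single_le_prod' (fun i _ => hk.1 i) (Finset.mem_univ 0)
      _ ≤ N := hk.2
lemma hcp_one {N : ℕ} : (hcp 1 N).card = N := by
  have : hcp 1 N = (Finset.Icc 1 N).image (fun n => fun _ : Fin 1 => n) := by
    ext k
    simp only [hcp, Finset.mem_filter, Fintype.mem_piFinset, Finset.mem_image, Finset.mem_Icc]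
    constructor
    · rintro ⟨h1, h2⟩
      exact ⟨k 0, ⟨(h1 0).1, (h1 0).2⟩, by funext j; rw [Subsingleton.elim j 0]⟩
    · rintro ⟨n, hn, rfl⟩
      exact ⟨fun j => hn, by simpa using hn.2⟩
  rw [this, Finset.card_image_of_injective _ (fun a b h => congrFun h 0)]
  simp


lemma log_step (n : ℕ) (hn : 1 ≤ n) :
    1/((n:ℝ)+1) ≤ Real.log (n+1) - Real.log n ∧ Real.log (n+1) - Real.log n ≤ 1/n := by
  have hn0 : (0:ℝ) < n := by exact_mod_cast hn
  have hn1 : (0:ℝ) < (n:ℝ)+1 := by linarith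
  constructor
  · have h := Real.log_le_sub_one_of_pos (x := (n:ℝ)/((n:ℝ)+1)) (by positivity)
    rw [Real.log_div (ne_of_gt hn0) (ne_of_gt hn1)] at h
    have : (n:ℝ)/((n:ℝ)+1) - 1 = -(1/((n:ℝ)+1)) := by field_simp; ring
    rw [this] at h
    linarith
  · have h := Real.log_le_sub_one_of_pos (x := ((n:ℝ)+1)/(n:ℝ)) (by positivity)
    rw [Real.log_div (ne_of_gt hn1) (ne_of_gt hn0)] at h
    have : ((n:ℝ)+1)/(n:ℝ) - 1 = 1/(n:ℝ) := by field_simp; ring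
    rw [this] at h
    linarith

lemma harm_le (N : ℕ) : ∑ m ∈ Finset.Icc 1 N, (1/(m:ℝ)) ≤ 1 + Real.log N := by
  induction N with
  | zero => simp
  | succ n ih =>
    rw [Finset.sum_Icc_succ_top (by omega)]
    rcases Nat.eq_zero_or_pos n with rfl | hn
    · simp
    have := (log_step n hn).1
    push_cast
    push_cast at ih this
    linarith

lemma harm_ge' (N : ℕ) : Real.log (N+1) ≤ ∑ m ∈ Finset.Icc 1 N, (1/(m:ℝ)) := by
  induction N with
  | zero => simp
  | succ n ih =>
    rw [Finset.sum_Icc_succ_top (by omega)]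
    have := (log_step (n+1) (by omega)).2
    push_cast
    push_cast at ih this
    linarith

lemma harm_ge (N : ℕ) : Real.log N ≤ ∑ m ∈ Finset.Icc 1 N, (1/(m:ℝ)) := by
  refine le_trans ?_ (harm_ge' N)
  rcases Nat.eq_zero_or_pos N with rfl | hN
  · simp
  apply Real.log_le_log (by exact_mod_cast hN)
  push_cast; linarith
lemma hcp_upper (d : ℕ) : ∀ N : ℕ, 1 ≤ N →
    ((hcp (d+1) N).card : ℝ) ≤ N * (1 + Real.log N)^d := by
  induction d with
  | zero =>
    intro N hN
    rw [hcp_one]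
    simp
  | succ d ih =>
    intro N hN
    rw [hcp_rec]
    have hlogN : 0 ≤ Real.log N := Real.log_natCast_nonneg N
    push_cast
    calc ∑ m ∈ Finset.Icc 1 N, ((hcp (d+1) (N/m)).card : ℝ)
        ≤ ∑ m ∈ Finset.Icc 1 N, (N:ℝ)/m * (1 + Real.log N)^d := by
          refine Finset.sum_le_sum fun m hm => ?_
          rw [Finset.mem_Icc] at hm
          have h1 : 1 ≤ N / m := (Nat.one_le_div_iff (by omega)).mpr hm.2
          refine le_trans (ih (N/m) h1) ?_
          have hc : ((N/m : ℕ) : ℝ) ≤ (N:ℝ)/m := Nat.cast_div_le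
          have hl : Real.log (N/m : ℕ) ≤ Real.log N := by
            apply Real.log_le_log (by exact_mod_cast h1)
            exact_mod_cast Nat.div_le_self N m
          have hp : (1 + Real.log (N/m : ℕ))^d ≤ (1 + Real.log N)^d := by
            apply pow_le_pow_left₀ (by positivity) (by linarith)
          have h0 : (0:ℝ) ≤ ((N/m : ℕ) : ℝ) := by positivity
          calc ((N/m:ℕ):ℝ) * (1 + Real.log (N/m:ℕ))^d
              ≤ ((N/m:ℕ):ℝ) * (1 + Real.log N)^d := by
                apply mul_le_mul_of_nonneg_left hp h0
            _ ≤ (N:ℝ)/m * (1 + Real.log N)^d := by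
                apply mul_le_mul_of_nonneg_right hc (by positivity)
      _ = (N:ℝ) * (1 + Real.log N)^d * ∑ m ∈ Finset.Icc 1 N, (1/(m:ℝ)) := by
          rw [Finset.mul_sum]
          refine Finset.sum_congr rfl fun m hm => ?_
          ring
      _ ≤ (N:ℝ) * (1 + Real.log N)^d * (1 + Real.log N) := by
          apply mul_le_mul_of_nonneg_left (harm_le N) (by positivity)
      _ = (N:ℝ) * (1 + Real.log N)^(d+1) := by ring
lemma hcp_ge (d : ℕ) : ∀ N, N ≤ (hcp (d+1) N).card := by
  induction d with
  | zero => intro N; rw [hcp_one]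
  | succ d ih =>
    intro N
    rw [hcp_rec]
    calc N = ∑ m ∈ Finset.Icc 1 N, 1 := by simp
      _ ≤ ∑ m ∈ Finset.Icc 1 N, (hcp (d+1) (N/m)).card := by
        refine Finset.sum_le_sum fun m hm => ?_
        rw [Finset.mem_Icc] at hm
        calc 1 ≤ N / m := (Nat.one_le_div_iff (by omega)).mpr hm.2
          _ ≤ (hcp (d+1) (N/m)).card := ih _

lemma hcp_lower (d : ℕ) : ∃ c : ℝ, 0 < c ∧ ∀ N : ℕ, 2 ≤ N →
    c * N * Real.log N ^ d ≤ ((hcp (d+1) N).card : ℝ) := by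
  induction d with
  | zero =>
    exact ⟨1, one_pos, fun N hN => by rw [hcp_one]; simp⟩
  | succ d ih =>
    obtain ⟨c, hc, H⟩ := ih
    refine ⟨min (c/(2*4^(d+1))) ((Real.log 16)^(d+1))⁻¹, ?_, ?_⟩
    · apply lt_min (by positivity)
      have : (0:ℝ) < Real.log 16 := Real.log_pos (by norm_num)
      positivity
    intro N hN
    have hL : 0 ≤ Real.log N := Real.log_natCast_nonneg N
    rcases lt_or_ge N 16 with h16 | h16
    -- small case
    · have h1 : Real.log N ≤ Real.log 16 := by
        apply Real.log_le_log (by positivity)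
        exact_mod_cast h16.le
      have hlog16 : (0:ℝ) < Real.log 16 := Real.log_pos (by norm_num)
      calc min (c/(2*4^(d+1))) ((Real.log 16)^(d+1))⁻¹ * N * Real.log N ^ (d+1)
          ≤ ((Real.log 16)^(d+1))⁻¹ * N * Real.log 16 ^ (d+1) := by
            apply mul_le_mul (mul_le_mul (min_le_right _ _) le_rfl (by positivity) (by positivity))
              (pow_le_pow_left₀ hL h1 _) (by positivity) (by positivity)
        _ = N := by field_simp
        _ ≤ ((hcp (d+1+1) N).card : ℝ) := by exact_mod_cast hcp_ge (d+1) N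
    -- main case
    · set s := Nat.sqrt N with hs
      have hs4 : 4 ≤ s := Nat.le_sqrt.mpr (by omega)
      have hssN : s * s ≤ N := Nat.sqrt_le N
      have hsN : s ≤ N := Nat.sqrt_le_self N
      have hlogs : Real.log N / 4 ≤ Real.log s := by
        -- (2s)^2 > N, so log N < 2 log (2s) = 2 log 2 + 2 log s ≤ 2 log s + (log N)/2
        have h2s : (N:ℝ) < ((2*s)*(2*s) : ℕ) := by
          have : N < (s+1)*(s+1) := Nat.lt_succ_sqrt N
          have h2 : (s+1)*(s+1) ≤ (2*s)*(2*s) := by nlinarith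
          exact_mod_cast lt_of_lt_of_le this h2
        have hlog2s : Real.log N ≤ Real.log ((2*s)*(2*s):ℕ) := by
          apply Real.log_le_log (by positivity) h2s.le
        have hsp : (0:ℝ) < (s:ℝ) := by exact_mod_cast (by omega : 0 < s)
        rw [show (((2*s)*(2*s):ℕ):ℝ) = (2*(s:ℝ))*(2*(s:ℝ)) by push_cast; ring,
          Real.log_mul (by positivity) (by positivity),
          Real.log_mul (by norm_num) (ne_of_gt hsp)] at hlog2s
        have hlog2 : Real.log 2 ≤ Real.log N / 4 := by
          have : Real.log 16 ≤ Real.log N := by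
            apply Real.log_le_log (by norm_num)
            exact_mod_cast h16
          have h16' : Real.log 16 = 4 * Real.log 2 := by
            rw [show (16:ℝ) = 2^4 by norm_num, Real.log_pow]; push_cast; ring
          linarith
        linarith
      have hterm : ∀ m ∈ Finset.Icc 1 s,
          c * ((N:ℝ)/(2*m)) * (Real.log N / 4)^d ≤ ((hcp (d+1) (N/m)).card : ℝ) := by
        intro m hm
        rw [Finset.mem_Icc] at hm
        have hm1 : 1 ≤ m := hm.1
        have hmpos : (0:ℝ) < m := by exact_mod_cast hm1
        have hq2 : s ≤ N / m :=
          Nat.le_div_iff_mul_le (by omega) |>.mpr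
            (le_trans (Nat.mul_le_mul_left s hm.2) hssN)
        have hq2' : 2 ≤ N / m := by omega
        have hcast : (N:ℝ)/(2*m) ≤ ((N/m : ℕ):ℝ) := by
          have h1 : N < m * (N/m) + m := by
            have := Nat.div_add_mod N m
            have := Nat.mod_lt N (show 0 < m by omega)
            omega
          have h2 : m * (N/m) + m ≤ 2 * m * (N/m) := by nlinarith [hq2']
          have : N ≤ 2 * m * (N / m) := by omega
          have h3 : (N:ℝ) ≤ 2 * m * ((N/m : ℕ):ℝ) := by exact_mod_cast this
          rw [div_le_iff₀ (by positivity)]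
          linarith
        have hlogq : Real.log N / 4 ≤ Real.log ((N/m : ℕ):ℝ) := by
          refine le_trans hlogs ?_
          apply Real.log_le_log (by exact_mod_cast (by omega : 0 < s))
          exact_mod_cast hq2
        calc c * ((N:ℝ)/(2*m)) * (Real.log N / 4)^d
            ≤ c * ((N/m : ℕ):ℝ) * (Real.log ((N/m:ℕ)):ℝ)^d := by
              apply mul_le_mul (mul_le_mul le_rfl hcast (by positivity) hc.le)
                (pow_le_pow_left₀ (by positivity) hlogq d) (by positivity) (by positivity)
          _ ≤ ((hcp (d+1) (N/m)).card : ℝ) := H (N/m) hq2'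
      have hsum : ∑ m ∈ Finset.Icc 1 s, c * ((N:ℝ)/(2*m)) * (Real.log N / 4)^d
          ≤ ((hcp (d+1+1) N).card : ℝ) := by
        rw [hcp_rec]
        push_cast
        refine le_trans (Finset.sum_le_sum hterm) ?_
        apply Finset.sum_le_sum_of_subset_of_nonneg
        · exact Finset.Icc_subset_Icc le_rfl hsN
        · intro i _ _; positivity
      refine le_trans ?_ hsum
      have hrw : ∑ m ∈ Finset.Icc 1 s, c * ((N:ℝ)/(2*m)) * (Real.log N / 4)^d
          = c * ((N:ℝ)/2) * (Real.log N / 4)^d * ∑ m ∈ Finset.Icc 1 s, (1/(m:ℝ)) := by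
        rw [Finset.mul_sum]
        refine Finset.sum_congr rfl fun m hm => ?_
        field_simp
      rw [hrw]
      calc min (c/(2*4^(d+1))) ((Real.log 16)^(d+1))⁻¹ * N * Real.log N ^ (d+1)
          ≤ c/(2*4^(d+1)) * N * Real.log N ^ (d+1) := by
            apply mul_le_mul (mul_le_mul (min_le_left _ _) le_rfl (by positivity) (by positivity))
              le_rfl (by positivity) (by positivity)
        _ = c * ((N:ℝ)/2) * (Real.log N / 4)^d * (Real.log N / 4) := by
            rw [div_pow, pow_succ]
            field_simp
            ring
        _ ≤ c * ((N:ℝ)/2) * (Real.log N / 4)^d * ∑ m ∈ Finset.Icc 1 s, (1/(m:ℝ)) := by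
            apply mul_le_mul_of_nonneg_left (le_trans hlogs (harm_ge s)) (by positivity)
noncomputable def hcz (d N : ℕ) : Finset (Fin d → ℤ) :=
  (Fintype.piFinset fun _ : Fin d => Finset.Icc (-(N : ℤ)) (N : ℤ)).filter
    fun k => (∏ j, max |k j| 1) ≤ (N : ℤ)

lemma hcz_lower (d N : ℕ) : (hcp d N).card ≤ (hcz d N).card := by
  apply Finset.card_le_card_of_injOn (fun k j => (k j : ℤ))
  · intro k hk
    rw [Finset.mem_coe, mem_hcp] at hk
    simp only [Finset.mem_coe, hcz, Finset.mem_filter, Fintype.mem_piFinset, Finset.mem_Icc]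
    have hb : ∀ j, k j ≤ N := by
      intro j
      calc k j ≤ ∏ i, k i := Finset.single_le_prod' (fun i _ => hk.1 i) (Finset.mem_univ j)
        _ ≤ N := hk.2
    have hmax : ∀ j, max |(k j : ℤ)| 1 = (k j : ℤ) := by
      intro j
      rw [abs_of_nonneg (by positivity)]
      exact max_eq_left (by exact_mod_cast hk.1 j)
    refine ⟨fun j => ⟨by omega, by exact_mod_cast hb j⟩, ?_⟩
    calc ∏ j, max |(k j : ℤ)| 1 = ∏ j, ((k j : ℤ)) := by
          exact Finset.prod_congr rfl fun j _ => hmax j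
      _ = ((∏ j, k j : ℕ) : ℤ) := by push_cast; rfl
      _ ≤ (N : ℤ) := by exact_mod_cast hk.2
  · intro k _ k' _ h
    funext j
    have : ((k j : ℤ)) = ((k' j : ℤ)) := congrFun h j
    exact_mod_cast this

lemma hcz_upper (d N : ℕ) : (hcz d N).card ≤ 3^d * (hcp d N).card := by
  set f : (Fin d → ℤ) → (Fin d → ℕ) := fun k j => (max |k j| 1).toNat with hf
  have himg : (hcz d N).image f ⊆ hcp d N := by
    intro a ha
    rw [Finset.mem_image] at ha
    obtain ⟨k, hk, rfl⟩ := ha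
    simp only [hcz, Finset.mem_filter] at hk
    rw [mem_hcp]
    have hpos : ∀ j, (1:ℤ) ≤ max |k j| 1 := fun j => le_max_right _ _
    constructor
    · intro j
      have := hpos j
      simp only [hf]
      omega
    · have : ((∏ j, (max |k j| 1).toNat : ℕ) : ℤ) = ∏ j, max |k j| 1 := by
        push_cast
        refine Finset.prod_congr rfl fun j _ => ?_
        have := hpos j; omega
      have h2 := hk.2
      have : ((∏ j, f k j : ℕ) : ℤ) ≤ (N : ℤ) := by rw [show (∏ j, f k j : ℕ) = ∏ j, (max |k j| 1).toNat from rfl, this]; exact h2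
      exact_mod_cast this
  have hcard : (hcz d N).card ≤ 3^d * ((hcz d N).image f).card := by
    apply Finset.card_le_mul_card_image
    intro a ha
    have hsub : (hcz d N).filter (fun x => f x = a) ⊆
        Fintype.piFinset (fun j => ({(a j : ℤ), -(a j : ℤ), 0} : Finset ℤ)) := by
      intro k hk
      rw [Finset.mem_filter] at hk
      rw [Fintype.mem_piFinset]
      intro j
      have := congrFun hk.2 j
      simp only [hf] at this
      have hpos : (1:ℤ) ≤ max |k j| 1 := le_max_right _ _
      have haj : (a j : ℤ) = max |k j| 1 := by omega
      simp only [Finset.mem_insert, Finset.mem_singleton]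
      rcases eq_or_ne (k j) 0 with h0 | h0
      · right; right; exact h0
      · have h1 : (1:ℤ) ≤ |k j| := by
          rcases lt_or_gt_of_ne h0 with h | h
          · rw [abs_of_neg h]; omega
          · rw [abs_of_pos h]; omega
        have habs : |k j| = (a j : ℤ) := by
          rw [haj]
          exact (max_eq_left h1).symm
        rcases abs_cases (k j) with ⟨h, _⟩ | ⟨h, _⟩
        · left; linarith [habs, h]
        · right; left; linarith [habs, h]
    calc ((hcz d N).filter (fun x => f x = a)).card
        ≤ (Fintype.piFinset (fun j => ({(a j : ℤ), -(a j : ℤ), 0} : Finset ℤ))).card :=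
          Finset.card_le_card hsub
      _ = ∏ j : Fin d, ({(a j : ℤ), -(a j : ℤ), 0} : Finset ℤ).card := by
          rw [Fintype.card_piFinset]
      _ ≤ ∏ j : Fin d, 3 := by
          refine Finset.prod_le_prod' fun j _ => ?_
          refine le_trans (Finset.card_insert_le _ _) ?_
          refine Nat.succ_le_succ (le_trans (Finset.card_insert_le _ _) ?_)
          simp
      _ = 3^d := by simp
  calc (hcz d N).card ≤ 3^d * ((hcz d N).image f).card := hcard
    _ ≤ 3^d * (hcp d N).card := by
        apply Nat.mul_le_mul_left
        exact Finset.card_le_card himg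

/-- The cardinality of the hyperbolic cross
`Γ(N) = {k ∈ ℤ^d : ∏_j max{|k_j|,1} ≤ N}` satisfies
`|Γ(N)| ≍ N (log N)^{d-1}` for `N ≥ 2`, with constants depending only on `d`. -/
theorem stmt12 (d : ℕ) (hd : 1 ≤ d) :
    ∃ c C : ℝ, 0 < c ∧ 0 < C ∧ ∀ N : ℕ, 2 ≤ N →
      c * N * Real.log N ^ (d - 1) ≤
        (((Fintype.piFinset fun _ : Fin d => Finset.Icc (-(N : ℤ)) (N : ℤ)).filter
            fun k => (∏ j, max |k j| 1) ≤ (N : ℤ)).card : ℝ) ∧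
      (((Fintype.piFinset fun _ : Fin d => Finset.Icc (-(N : ℤ)) (N : ℤ)).filter
            fun k => (∏ j, max |k j| 1) ≤ (N : ℤ)).card : ℝ) ≤
        C * N * Real.log N ^ (d - 1) := by
  obtain ⟨e, rfl⟩ : ∃ e, d = e + 1 := ⟨d - 1, by omega⟩
  obtain ⟨c₀, hc₀, Hlow⟩ := hcp_lower e
  refine ⟨c₀, 3^(e+1) * (1 + 1/Real.log 2)^e, hc₀, ?_, ?_⟩
  · have h2 : (0:ℝ) < Real.log 2 := Real.log_pos (by norm_num)
    positivity
  intro N hN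
  have hcard_eq : ((Fintype.piFinset fun _ : Fin (e+1) => Finset.Icc (-(N : ℤ)) (N : ℤ)).filter
      fun k => (∏ j, max |k j| 1) ≤ (N : ℤ)).card = (hcz (e+1) N).card := rfl
  rw [hcard_eq]
  have hsub : e + 1 - 1 = e := rfl
  rw [hsub]
  have hL2 : (0:ℝ) < Real.log 2 := Real.log_pos (by norm_num)
  have hLN : Real.log 2 ≤ Real.log N := by
    apply Real.log_le_log (by norm_num)
    exact_mod_cast hN
  have hL : 0 ≤ Real.log N := le_trans hL2.le hLN
  constructor
  · calc c₀ * N * Real.log N ^ e ≤ ((hcp (e+1) N).card : ℝ) := Hlow N hN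
      _ ≤ ((hcz (e+1) N).card : ℝ) := by exact_mod_cast hcz_lower (e+1) N
  · have h1 : ((hcz (e+1) N).card : ℝ) ≤ 3^(e+1) * ((hcp (e+1) N).card : ℝ) := by
      exact_mod_cast hcz_upper (e+1) N
    have h2 : ((hcp (e+1) N).card : ℝ) ≤ N * (1 + Real.log N)^e := hcp_upper e N (le_trans one_le_two hN)
    have h3 : 1 + Real.log N ≤ (1 + 1/Real.log 2) * Real.log N := by
      have : 1 ≤ Real.log N / Real.log 2 := (one_le_div hL2).mpr hLN
      have hexp : (1 + 1/Real.log 2) * Real.log N = Real.log N + Real.log N / Real.log 2 := by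
        field_simp
      rw [hexp]
      linarith
    calc ((hcz (e+1) N).card : ℝ) ≤ 3^(e+1) * (N * (1 + Real.log N)^e) := by
          refine le_trans h1 ?_
          apply mul_le_mul_of_nonneg_left h2 (by positivity)
      _ ≤ 3^(e+1) * (N * ((1 + 1/Real.log 2) * Real.log N)^e) := by
          apply mul_le_mul_of_nonneg_left _ (by positivity)
          apply mul_le_mul_of_nonneg_left _ (by positivity)
          exact pow_le_pow_left₀ (by positivity) h3 e
      _ = 3^(e+1) * (1 + 1/Real.log 2)^e * N * Real.log N ^ e := by
          rw [mul_pow]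
          ring
end

section
/- For the modified hyperbolic cross Γ̃(N, d) := {k ∈ ℤ^d : ∏_{j=1}^d (1 + |k_j|) ≤ N}, one has the dimension-explicit cardinality bound |Γ̃(N, d)| ≤ e^2 N^{2 + log_2 d} for all N ∈ ℕ and d ≥ 1. -/
open Finset Real

private lemma hc_sum_inv_sq (n : ℕ) :
    ∑ m ∈ Finset.Icc (1:ℤ) (n:ℤ), (((1 + |m| : ℤ) : ℝ))⁻¹ ^ 2 ≤ 1 - ((1 + n : ℝ))⁻¹ := by
  induction n with
  | zero => simp
  | succ n ih =>
    have hins : Finset.Icc (1:ℤ) ((n+1:ℕ):ℤ) = insert ((n:ℤ)+1) (Finset.Icc (1:ℤ) (n:ℤ)) := by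
      push_cast
      ext m
      simp only [Finset.mem_Icc, Finset.mem_insert]
      omega
    have hnot : ((n:ℤ)+1) ∉ Finset.Icc (1:ℤ) (n:ℤ) := by
      simp
    rw [hins, Finset.sum_insert hnot]
    have habs : |((n:ℤ)+1)| = (n:ℤ)+1 := abs_of_nonneg (by omega)
    have hx0 : (0:ℝ) < 1 + n := by positivity
    have hx1 : (0:ℝ) < 2 + n := by positivity
    have hterm : (((1 + |((n:ℤ)+1)| : ℤ) : ℝ))⁻¹ ^ 2 ≤ (1 + (n:ℝ))⁻¹ - (2 + (n:ℝ))⁻¹ := by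
      rw [habs]
      have hcast : (((1 + ((n:ℤ)+1) : ℤ) : ℝ)) = 2 + (n:ℝ) := by push_cast; ring
      rw [hcast]
      have h1 : (1 + (n:ℝ))⁻¹ - (2 + (n:ℝ))⁻¹ = ((1 + (n:ℝ)) * (2 + (n:ℝ)))⁻¹ := by
        field_simp
        ring
      have h2 : ((2 + (n:ℝ)))⁻¹ ^ 2 = ((2 + (n:ℝ)) ^ 2)⁻¹ := by
        rw [inv_pow]
      rw [h1, h2]
      apply inv_anti₀ (by positivity)
      nlinarith
    have : (1 : ℝ) + ((n:ℕ)+1 : ℕ) = 2 + (n:ℝ) := by push_cast; ring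
    rw [this]
    linarith

/-- Dimension-explicit cardinality bound for the modified hyperbolic cross
`Γ̃(N,d) = {k ∈ ℤ^d : ∏_j (1 + |k_j|) ≤ N}`: one has
`|Γ̃(N,d)| ≤ e^2 N^{2 + log_2 d}` for all `N ∈ ℕ` and `d ≥ 1`. -/
theorem stmt13 (d : ℕ) (hd : 1 ≤ d) (N : ℕ) :
    (((Fintype.piFinset fun _ : Fin d => Finset.Icc (-(N : ℤ)) (N : ℤ)).filter
        fun k => (∏ j, (1 + |k j|)) ≤ (N : ℤ)).card : ℝ) ≤
      Real.exp 2 * (N : ℝ) ^ ((2 : ℝ) + Real.logb 2 d) := by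
  have hd1 : (1:ℝ) ≤ (d:ℝ) := by exact_mod_cast hd
  have hdpos : (0:ℝ) < d := by linarith
  by_cases hN : N = 0
  · subst hN
    have hempty : ((Fintype.piFinset fun _ : Fin d => Finset.Icc (-((0:ℕ) : ℤ)) ((0:ℕ) : ℤ)).filter
        fun k => (∏ j, (1 + |k j|)) ≤ ((0:ℕ) : ℤ)) = ∅ := by
      rw [Finset.filter_eq_empty_iff]
      intro k _
      have h1 : (0:ℤ) < ∏ j, (1 + |k j|) := by
        apply Finset.prod_pos
        intro j _
        have := abs_nonneg (k j)
        omega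
      push_neg
      simpa using h1
    rw [hempty]
    have hexp : (2:ℝ) + Real.logb 2 d ≠ 0 := by
      have : (0:ℝ) ≤ Real.logb 2 d := Real.logb_nonneg (by norm_num) hd1
      linarith
    simp [Real.zero_rpow hexp]
  -- Main case : N ≥ 1
  have hN1 : (1:ℝ) ≤ (N:ℝ) := by
    have : 1 ≤ N := Nat.one_le_iff_ne_zero.mpr hN
    exact_mod_cast this
  have hNpos : (0:ℝ) < N := by linarith
  set L := Nat.log 2 N with hLdef
  set S := ((Fintype.piFinset fun _ : Fin d => Finset.Icc (-(N : ℤ)) (N : ℤ)).filter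
      fun k => (∏ j, (1 + |k j|)) ≤ (N : ℤ)) with hS
  -- the weight function
  set w : ℤ → ℝ := fun m => (((1 + |m| : ℤ) : ℝ))⁻¹ ^ 2 * (if m = 0 then 1 else (d:ℝ)⁻¹)
    with hw
  have hwnonneg : ∀ m : ℤ, 0 ≤ w m := by
    intro m
    have h1 : (0:ℝ) < ((1 + |m| : ℤ) : ℝ) := by
      have := abs_nonneg m
      exact_mod_cast (by omega : (0:ℤ) < 1 + |m|)
    have h2 : (0:ℝ) ≤ (if m = 0 then 1 else (d:ℝ)⁻¹) := by
      split <;> positivity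
    positivity
  -- pointwise bound
  have hpoint : ∀ k ∈ S, (1:ℝ) ≤ (N:ℝ)^2 * (d:ℝ)^L * ∏ j, w (k j) := by
    intro k hk
    rw [hS, Finset.mem_filter] at hk
    obtain ⟨-, hprod⟩ := hk
    have hfac1 : ∀ j : Fin d, (1:ℤ) ≤ 1 + |k j| := by
      intro j; have := abs_nonneg (k j); omega
    set s := (Finset.univ.filter fun j : Fin d => ¬ k j = 0).card with hsdef
    -- s ≤ L
    have hsL : s ≤ L := by
      have h2s : (2:ℤ)^s ≤ ∏ j, (1 + |k j|) := by
        have hsub : (Finset.univ.filter fun j : Fin d => ¬ k j = 0) ⊆ Finset.univ :=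
          Finset.filter_subset _ _
        have h1 : ∏ j ∈ (Finset.univ.filter fun j : Fin d => ¬ k j = 0), (1 + |k j|)
            ≤ ∏ j, (1 + |k j|) := by
          calc ∏ j ∈ (Finset.univ.filter fun j : Fin d => ¬ k j = 0), (1 + |k j|)
              ≤ (∏ j ∈ (Finset.univ.filter fun j : Fin d => ¬ k j = 0), (1 + |k j|)) *
                ∏ j ∈ (Finset.univ.filter fun j : Fin d => ¬¬ k j = 0), (1 + |k j|) := by
                have ha : (0:ℤ) ≤ ∏ j ∈ (Finset.univ.filter fun j : Fin d => ¬ k j = 0),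
                    (1 + |k j|) := Finset.prod_nonneg (fun j _ => by have := hfac1 j; omega)
                have hb : (1:ℤ) ≤ ∏ j ∈ (Finset.univ.filter fun j : Fin d => ¬¬ k j = 0),
                    (1 + |k j|) := by
                  have hp : (0:ℤ) < ∏ j ∈ (Finset.univ.filter fun j : Fin d => ¬¬ k j = 0),
                      (1 + |k j|) :=
                    Finset.prod_pos (fun j _ => by have := hfac1 j; omega)
                  have := Int.add_one_le_iff.mpr hp
                  simpa using this
                exact le_mul_of_one_le_right ha hb
            _ = ∏ j, (1 + |k j|) :=
                Finset.prod_filter_mul_prod_filter_not Finset.univ _ _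
        have h2 : (2:ℤ)^s ≤ ∏ j ∈ (Finset.univ.filter fun j : Fin d => ¬ k j = 0),
            (1 + |k j|) := by
          rw [← Finset.prod_const]
          apply Finset.prod_le_prod
          · intro j _; norm_num
          · intro j hj
            rw [Finset.mem_filter] at hj
            have : k j ≠ 0 := hj.2
            have : 1 ≤ |k j| := by
              rcases lt_trichotomy (k j) 0 with h | h | h
              · have := abs_of_neg h; omega
              · exact absurd h this
              · have := abs_of_pos h; omega
            omega
        exact le_trans h2 h1
      have hN2 : (2:ℤ)^s ≤ (N:ℤ) := le_trans h2s hprod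
      have hN3 : (2:ℕ)^s ≤ N := by exact_mod_cast hN2
      exact Nat.le_log_of_pow_le (by norm_num) hN3
    -- the product of weights
    have hApos : (0:ℤ) < ∏ j, (1 + |k j|) :=
      Finset.prod_pos (fun j _ => by have := hfac1 j; omega)
    set A : ℝ := ((∏ j, (1 + |k j|) : ℤ) : ℝ) with hA
    have hA1 : (1:ℝ) ≤ A := by
      have h : (1:ℤ) ≤ ∏ j, (1 + |k j|) := hApos
      rw [hA]
      exact_mod_cast h
    have hAN : A ≤ (N:ℝ) := by
      rw [hA]
      exact_mod_cast hprod
    have hprodw : ∏ j, w (k j) = A⁻¹ ^ 2 * ((d:ℝ)⁻¹) ^ s := by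
      rw [hw]
      simp only
      rw [Finset.prod_mul_distrib]
      congr 1
      · rw [Finset.prod_pow, Finset.prod_inv_distrib]
        congr 2
        rw [hA]
        push_cast
        ring
      · rw [hsdef, ← Finset.prod_const, Finset.prod_filter]
        apply Finset.prod_congr rfl
        intro j _
        rw [ite_not]
    rw [hprodw]
    have hkey : A^2 * (d:ℝ)^s ≤ (N:ℝ)^2 * (d:ℝ)^L := by
      apply mul_le_mul
      · exact pow_le_pow_left₀ (by linarith) hAN 2
      · exact pow_le_pow_right₀ hd1 hsL
      · positivity
      · positivity
    have hpos : (0:ℝ) < A^2 * (d:ℝ)^s := by positivity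
    have h1 : (1:ℝ) ≤ ((N:ℝ)^2 * (d:ℝ)^L) / (A^2 * (d:ℝ)^s) := (one_le_div hpos).mpr hkey
    calc (1:ℝ) ≤ ((N:ℝ)^2 * (d:ℝ)^L) / (A^2 * (d:ℝ)^s) := h1
      _ = (N:ℝ)^2 * (d:ℝ)^L * (A⁻¹ ^ 2 * ((d:ℝ)⁻¹) ^ s) := by
          rw [div_eq_mul_inv, mul_inv, inv_pow, inv_pow]
  -- sum the pointwise bound
  have hstep2 : (S.card : ℝ) ≤ (N:ℝ)^2 * (d:ℝ)^L *
      (∑ m ∈ Finset.Icc (-(N:ℤ)) (N:ℤ), w m) ^ d := by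
    have h1 : (S.card : ℝ) = ∑ _k ∈ S, (1:ℝ) := by simp
    rw [h1]
    have h2 : ∑ _k ∈ S, (1:ℝ) ≤ ∑ k ∈ S, (N:ℝ)^2 * (d:ℝ)^L * ∏ j, w (k j) :=
      Finset.sum_le_sum hpoint
    have h3 : ∑ k ∈ S, (N:ℝ)^2 * (d:ℝ)^L * ∏ j, w (k j)
        ≤ ∑ k ∈ (Fintype.piFinset fun _ : Fin d => Finset.Icc (-(N : ℤ)) (N : ℤ)),
            (N:ℝ)^2 * (d:ℝ)^L * ∏ j, w (k j) := by
      apply Finset.sum_le_sum_of_subset_of_nonneg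
      · rw [hS]; exact Finset.filter_subset _ _
      · intro k _ _
        have : (0:ℝ) ≤ ∏ j, w (k j) := Finset.prod_nonneg (fun j _ => hwnonneg _)
        positivity
    have h4 : ∑ k ∈ (Fintype.piFinset fun _ : Fin d => Finset.Icc (-(N : ℤ)) (N : ℤ)),
        (N:ℝ)^2 * (d:ℝ)^L * ∏ j, w (k j)
        = (N:ℝ)^2 * (d:ℝ)^L * (∑ m ∈ Finset.Icc (-(N:ℤ)) (N:ℤ), w m) ^ d := by
      rw [← Finset.mul_sum]
      congr 1
      rw [← Finset.prod_univ_sum]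
      rw [Finset.prod_const, Finset.card_univ, Fintype.card_fin]
    linarith [h2, h3, le_of_eq h4]
  -- bound the inner sum
  have hsumw : ∑ m ∈ Finset.Icc (-(N:ℤ)) (N:ℤ), w m ≤ 1 + 2/d := by
    have hdecomp : Finset.Icc (-(N:ℤ)) (N:ℤ) =
        insert 0 ((Finset.Icc (1:ℤ) (N:ℤ)) ∪ (Finset.Icc (1:ℤ) (N:ℤ)).image (fun m => -m)) := by
      ext m
      simp only [Finset.mem_insert, Finset.mem_union, Finset.mem_image, Finset.mem_Icc]
      constructor
      · rintro ⟨h1, h2⟩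
        rcases lt_trichotomy m 0 with h | h | h
        · right; right; exact ⟨-m, ⟨by omega, by omega⟩, by omega⟩
        · left; exact h
        · right; left; omega
      · rintro (h | ⟨h1, h2⟩ | ⟨x, ⟨hx1, hx2⟩, hx3⟩) <;> omega
    have hdisj : Disjoint (Finset.Icc (1:ℤ) (N:ℤ)) ((Finset.Icc (1:ℤ) (N:ℤ)).image (fun m => -m)) := by
      rw [Finset.disjoint_left]
      intro a ha hb
      simp only [Finset.mem_Icc] at ha
      simp only [Finset.mem_image, Finset.mem_Icc] at hb
      obtain ⟨x, ⟨hx1, _⟩, hx3⟩ := hb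
      omega
    have hnotmem : (0:ℤ) ∉ (Finset.Icc (1:ℤ) (N:ℤ)) ∪ (Finset.Icc (1:ℤ) (N:ℤ)).image (fun m => -m) := by
      simp only [Finset.mem_union, Finset.mem_image, Finset.mem_Icc]
      push_neg
      constructor
      · omega
      · intro x hx; omega
    rw [hdecomp, Finset.sum_insert hnotmem, Finset.sum_union hdisj]
    have himg : ∑ m ∈ (Finset.Icc (1:ℤ) (N:ℤ)).image (fun m => -m), w m
        = ∑ m ∈ Finset.Icc (1:ℤ) (N:ℤ), w m := by
      rw [Finset.sum_image (by intro x _ y _ h; simpa using h)]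
      apply Finset.sum_congr rfl
      intro m _
      rw [hw]
      simp only [abs_neg, neg_eq_zero]
    rw [himg]
    have h2d : (2:ℝ)/(d:ℝ) = 2 * (1/(d:ℝ)) := by ring
    have hw0 : w 0 = 1 := by rw [hw]; norm_num
    rw [hw0]
    have hpos : ∑ m ∈ Finset.Icc (1:ℤ) (N:ℤ), w m ≤ 1/d := by
      have heq : ∑ m ∈ Finset.Icc (1:ℤ) (N:ℤ), w m
          = (d:ℝ)⁻¹ * ∑ m ∈ Finset.Icc (1:ℤ) (N:ℤ), (((1 + |m| : ℤ) : ℝ))⁻¹ ^ 2 := by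
        rw [Finset.mul_sum]
        apply Finset.sum_congr rfl
        intro m hm
        simp only [Finset.mem_Icc] at hm
        rw [hw]
        simp only
        rw [if_neg (by omega)]
        ring
      rw [heq]
      have hb := hc_sum_inv_sq N
      have hb2 : ∑ m ∈ Finset.Icc (1:ℤ) (N:ℤ), (((1 + |m| : ℤ) : ℝ))⁻¹ ^ 2 ≤ 1 := by
        have : (0:ℝ) ≤ ((1 + (N:ℝ)))⁻¹ := by positivity
        linarith
      calc (d:ℝ)⁻¹ * ∑ m ∈ Finset.Icc (1:ℤ) (N:ℤ), (((1 + |m| : ℤ) : ℝ))⁻¹ ^ 2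
          ≤ (d:ℝ)⁻¹ * 1 := by
            apply mul_le_mul_of_nonneg_left hb2 (by positivity)
        _ = 1/d := by rw [mul_one, one_div]
    linarith
  -- (1 + 2/d)^d ≤ exp 2
  have hexp2 : (1 + 2/(d:ℝ))^d ≤ Real.exp 2 := by
    have h1 : (1:ℝ) + 2/d ≤ Real.exp (2/d) := by
      have := Real.add_one_le_exp (2/(d:ℝ))
      linarith
    have h2 : (1 + 2/(d:ℝ))^d ≤ (Real.exp (2/d))^d := by
      apply pow_le_pow_left₀ (by positivity) h1
    have h3 : (Real.exp (2/(d:ℝ)))^d = Real.exp 2 := by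
      rw [← Real.exp_nat_mul]
      congr 1
      field_simp
    rw [h3] at h2
    exact h2
  -- combine
  have hsum_pow : (∑ m ∈ Finset.Icc (-(N:ℤ)) (N:ℤ), w m) ^ d ≤ Real.exp 2 := by
    have hnn : (0:ℝ) ≤ ∑ m ∈ Finset.Icc (-(N:ℤ)) (N:ℤ), w m :=
      Finset.sum_nonneg (fun m _ => hwnonneg m)
    calc (∑ m ∈ Finset.Icc (-(N:ℤ)) (N:ℤ), w m) ^ d ≤ (1 + 2/(d:ℝ))^d :=
          pow_le_pow_left₀ hnn hsumw d
      _ ≤ Real.exp 2 := hexp2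
  have hfinal1 : (S.card : ℝ) ≤ (N:ℝ)^2 * (d:ℝ)^L * Real.exp 2 := by
    calc (S.card : ℝ) ≤ (N:ℝ)^2 * (d:ℝ)^L * (∑ m ∈ Finset.Icc (-(N:ℤ)) (N:ℤ), w m) ^ d :=
          hstep2
      _ ≤ (N:ℝ)^2 * (d:ℝ)^L * Real.exp 2 := by
          apply mul_le_mul_of_nonneg_left hsum_pow (by positivity)
  -- d^L ≤ N^(logb 2 d)
  have hdL : (d:ℝ)^L ≤ (N:ℝ) ^ (Real.logb 2 (d:ℝ)) := by
    have hLlogb : (L:ℝ) ≤ Real.logb 2 (N:ℝ) := by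
      rw [Real.le_logb_iff_rpow_le (by norm_num) hNpos]
      have h2L : (2:ℕ)^L ≤ N := Nat.pow_log_le_self 2 hN
      have : ((2:ℝ))^(L:ℝ) = ((2:ℕ)^L : ℝ) := by
        rw [Real.rpow_natCast]; push_cast; ring
      rw [this]
      exact_mod_cast h2L
    have h1 : (d:ℝ)^L = (d:ℝ) ^ ((L:ℕ):ℝ) := (Real.rpow_natCast _ _).symm
    have h2 : (N:ℝ) ^ (Real.logb 2 (d:ℝ)) = (d:ℝ) ^ (Real.logb 2 (N:ℝ)) := by
      rw [Real.rpow_def_of_pos hNpos, Real.rpow_def_of_pos hdpos, Real.logb, Real.logb]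
      congr 1
      ring
    rw [h1, h2]
    exact Real.rpow_le_rpow_of_exponent_le hd1 hLlogb
  have hrpow : Real.exp 2 * (N : ℝ) ^ ((2 : ℝ) + Real.logb 2 d)
      = (N:ℝ)^2 * (N:ℝ) ^ (Real.logb 2 (d:ℝ)) * Real.exp 2 := by
    rw [Real.rpow_add hNpos]
    have : (N:ℝ) ^ ((2:ℝ)) = (N:ℝ)^2 := by
      rw [show ((2:ℝ)) = ((2:ℕ):ℝ) by norm_num, Real.rpow_natCast]
    rw [this]
    ring
  rw [hrpow]
  calc (S.card : ℝ) ≤ (N:ℝ)^2 * (d:ℝ)^L * Real.exp 2 := hfinal1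
    _ ≤ (N:ℝ)^2 * (N:ℝ) ^ (Real.logb 2 (d:ℝ)) * Real.exp 2 := by
        apply mul_le_mul_of_nonneg_right _ (Real.exp_nonneg 2)
        apply mul_le_mul_of_nonneg_left hdL (by positivity)
end

section
/- For r > 1, ∑_{k ∈ ℤ^d, k > 0, ν(k) > N} ν(k)^{-r} ≍ N^{-r+1} (log N)^{d-1} as N → ∞, where ν(k) := k_1 k_2 ⋯ k_d, with constants depending only on r and d. -/
open Real ENNReal Finset

namespace Stmt15Aux

/-- The tail sum in `ℝ≥0∞`. -/
noncomputable def S (r : ℝ) (d N : ℕ) : ℝ≥0∞ :=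
  ∑' k : Fin d → ℕ, if (∀ j, 1 ≤ k j) ∧ N < ∏ j, k j
    then ENNReal.ofReal (((∏ j, k j : ℕ) : ℝ) ^ (-r)) else 0

/-- One-dimensional tail sum. -/
noncomputable def T (r : ℝ) (n : ℕ) : ℝ≥0∞ :=
  ∑' m : ℕ, if n < m then ENNReal.ofReal ((m : ℝ) ^ (-r)) else 0

lemma S_zero (r : ℝ) (N : ℕ) : S r 0 N = if N = 0 then 1 else 0 := by
  rw [S, tsum_eq_single (default : Fin 0 → ℕ)
    (fun b hb => absurd (Subsingleton.elim b default) hb)]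
  simp [Nat.lt_one_iff]

lemma harmonic_ub (n : ℕ) : ∑ m ∈ Finset.Icc 1 n, (m : ℝ)⁻¹ ≤ 1 + Real.log n := by
  have h := harmonic_le_one_add_log n
  rw [harmonic_eq_sum_Icc] at h
  push_cast at h
  convert h using 2

lemma harmonic_lb (n : ℕ) : Real.log (n + 1) ≤ ∑ m ∈ Finset.Icc 1 n, (m : ℝ)⁻¹ := by
  have h := log_add_one_le_harmonic n
  rw [harmonic_eq_sum_Icc] at h
  push_cast at h
  convert h using 2

lemma S_succ (r : ℝ) (d N : ℕ) :
    S r (d + 1) N = ∑' m : ℕ, if 1 ≤ m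
      then ENNReal.ofReal ((m : ℝ) ^ (-r)) * S r d (N / m) else 0 := by
  rw [S, ← (Fin.consEquiv (fun _ : Fin (d+1) => ℕ)).tsum_eq, ENNReal.tsum_prod']
  refine tsum_congr fun m => ?_
  rcases Nat.eq_zero_or_pos m with hm | hm
  · subst hm
    rw [if_neg (by norm_num)]
    refine ENNReal.tsum_eq_zero.mpr fun k => ?_
    rw [if_neg]
    rintro ⟨h1, -⟩
    simpa using h1 0
  · have hm1 : 1 ≤ m := hm
    rw [if_pos hm1, S, ← ENNReal.tsum_mul_left]
    refine tsum_congr fun k => ?_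
    have hcond : ((∀ j, 1 ≤ (Fin.consEquiv (fun _ : Fin (d+1) => ℕ)) (m, k) j)
        ∧ N < ∏ j, (Fin.consEquiv (fun _ : Fin (d+1) => ℕ)) (m, k) j) ↔
        ((∀ j, 1 ≤ k j) ∧ N / m < ∏ j, k j) := by
      simp only [Fin.consEquiv_apply, Fin.forall_fin_succ, Fin.cons_zero, Fin.cons_succ,
        Fin.prod_cons]
      rw [Nat.div_lt_iff_lt_mul hm, mul_comm]
      tauto
    by_cases hc : (∀ j, 1 ≤ k j) ∧ N / m < ∏ j, k j
    · rw [if_pos (hcond.mpr hc), if_pos hc]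
      have hP : 0 < ∏ j, k j := Finset.prod_pos fun j _ => hc.1 j
      simp only [Fin.consEquiv_apply, Fin.prod_cons]
      rw [← ENNReal.ofReal_mul (Real.rpow_nonneg (Nat.cast_nonneg m) _)]
      congr 1
      push_cast
      rw [Real.mul_rpow (Nat.cast_nonneg m) (Finset.prod_nonneg fun i _ => Nat.cast_nonneg _)]
    · rw [if_neg (fun h => hc (hcond.mp h)), if_neg hc, mul_zero]

lemma summable_rpow_neg {r : ℝ} (hr : 1 < r) :
    Summable (fun m : ℕ => (m : ℝ) ^ (-r)) :=
  Real.summable_nat_rpow.mpr (by linarith)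

lemma S_one (r : ℝ) (N : ℕ) : S r 1 N = T r N := by
  rw [S_succ, T]
  refine tsum_congr fun m => ?_
  rcases Nat.eq_zero_or_pos m with rfl | hm
  · simp
  · have hm1 : 1 ≤ m := hm
    rw [if_pos hm1, S_zero]
    by_cases h : N < m
    · rw [if_pos h, if_pos (Nat.div_eq_of_lt h), mul_one]
    · rw [if_neg h, if_neg, mul_zero]
      exact fun h0 => h ((Nat.div_eq_zero_iff.mp h0).resolve_left (Nat.pos_iff_ne_zero.mp hm))

lemma ofReal_tsum_rpow {r : ℝ} (hr : 1 < r) :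
    ∑' m : ℕ, ENNReal.ofReal ((m : ℝ) ^ (-r)) = ENNReal.ofReal (∑' m : ℕ, (m : ℝ) ^ (-r)) :=
  (ENNReal.ofReal_tsum_of_nonneg (fun m => Real.rpow_nonneg (Nat.cast_nonneg m) _)
    (summable_rpow_neg hr)).symm

lemma z_nonneg {r : ℝ} (hr : 1 < r) : 0 ≤ ∑' m : ℕ, (m : ℝ) ^ (-r) :=
  tsum_nonneg fun m => Real.rpow_nonneg (Nat.cast_nonneg m) _

lemma S_le_const {r : ℝ} (hr : 1 < r) (d N : ℕ) :
    S r d N ≤ ENNReal.ofReal ((∑' m : ℕ, (m : ℝ) ^ (-r)) ^ d) := by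
  set z := ∑' m : ℕ, (m : ℝ) ^ (-r) with hz
  induction d generalizing N with
  | zero =>
    rw [S_zero, pow_zero, ENNReal.ofReal_one]
    split <;> simp
  | succ d ih =>
    rw [S_succ]
    calc ∑' m : ℕ, (if 1 ≤ m then ENNReal.ofReal ((m : ℝ) ^ (-r)) * S r d (N / m) else 0)
        ≤ ∑' m : ℕ, ENNReal.ofReal ((m : ℝ) ^ (-r)) * ENNReal.ofReal (z ^ d) := by
          refine ENNReal.tsum_le_tsum fun m => ?_
          split
          · exact mul_le_mul_right (ih _) _
          · exact zero_le
      _ = ENNReal.ofReal z * ENNReal.ofReal (z ^ d) := by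
          rw [ENNReal.tsum_mul_right, ofReal_tsum_rpow hr]
      _ = ENNReal.ofReal (z ^ (d + 1)) := by
          rw [← ENNReal.ofReal_mul (z_nonneg hr), pow_succ, mul_comm]

lemma tail_lb {r : ℝ} (hr : 1 < r) {n : ℕ} (hn : 1 ≤ n) :
    ENNReal.ofReal (2 * 3 ^ (-r) * (n : ℝ) ^ (1 - r)) ≤ T r n := by
  have hn0 : (0:ℝ) < n := by exact_mod_cast hn
  calc ENNReal.ofReal (2 * 3 ^ (-r) * (n : ℝ) ^ (1 - r))
      = ∑ _m ∈ Finset.Ico (n + 1) (3 * n + 1), ENNReal.ofReal (((3 * n : ℕ) : ℝ) ^ (-r)) := by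
        rw [Finset.sum_const, Nat.card_Ico]
        have hcard : 3 * n + 1 - (n + 1) = 2 * n := by omega
        rw [hcard, nsmul_eq_mul, ← ENNReal.ofReal_natCast, ← ENNReal.ofReal_mul (by positivity)]
        refine congrArg _ ?_
        push_cast
        rw [Real.mul_rpow (by norm_num) hn0.le, Real.rpow_sub hn0, Real.rpow_one,
          Real.rpow_neg hn0.le, Real.rpow_neg (by norm_num : (0:ℝ) ≤ 3)]
        field_simp
    _ ≤ ∑ m ∈ Finset.Ico (n + 1) (3 * n + 1), ENNReal.ofReal ((m : ℝ) ^ (-r)) := by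
        refine Finset.sum_le_sum fun m hm => ?_
        rw [Finset.mem_Ico] at hm
        refine ENNReal.ofReal_le_ofReal ?_
        have hm0 : (0:ℝ) < m := by exact_mod_cast (by omega : 0 < m)
        refine Real.rpow_le_rpow_of_nonpos hm0 ?_ (by linarith)
        exact_mod_cast Nat.lt_succ_iff.mp hm.2
    _ ≤ ∑ m ∈ Finset.Ico (n + 1) (3 * n + 1),
          (if n < m then ENNReal.ofReal ((m : ℝ) ^ (-r)) else 0) := by
        refine Finset.sum_le_sum fun m hm => ?_
        rw [Finset.mem_Ico] at hm
        rw [if_pos (Nat.lt_of_succ_le hm.1)]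
    _ ≤ T r n := ENNReal.sum_le_tsum _

lemma tail_ub {r : ℝ} (hr : 1 < r) {n : ℕ} (hn : 1 ≤ n) :
    T r n ≤ ENNReal.ofReal ((r - 1)⁻¹ * (n : ℝ) ^ (1 - r)) := by
  have hn0 : (0:ℝ) < n := by exact_mod_cast hn
  set u : ℕ → ℝ := fun m => if n < m then (m : ℝ) ^ (-r) else 0 with hu
  have hu0 : ∀ m, 0 ≤ u m := by
    intro m; rw [hu]; dsimp only
    split
    · exact Real.rpow_nonneg (Nat.cast_nonneg m) _
    · exact le_refl 0
  have husum : Summable u := by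
    refine Summable.of_nonneg_of_le hu0 (fun m => ?_) (summable_rpow_neg hr)
    rw [hu]; dsimp only
    split
    · exact le_refl _
    · exact Real.rpow_nonneg (Nat.cast_nonneg m) _
  have hT : T r n = ENNReal.ofReal (∑' m, u m) := by
    rw [T, ENNReal.ofReal_tsum_of_nonneg hu0 husum]
    refine tsum_congr fun m => ?_
    rw [hu]; dsimp only
    split
    · rfl
    · exact ENNReal.ofReal_zero.symm
  rw [hT]
  refine ENNReal.ofReal_le_ofReal ?_
  refine tsum_le_of_sum_range_le hu0 fun K => ?_
  have hanti : AntitoneOn (fun x : ℝ => x ^ (-r)) (Set.Icc (n : ℝ) ((n : ℝ) + K)) :=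
    fun x hx y _ hxy =>
      Real.rpow_le_rpow_of_nonpos (lt_of_lt_of_le hn0 hx.1) hxy (by linarith)
  have hint := hanti.sum_le_integral
  calc ∑ m ∈ Finset.range K, u m
      ≤ ∑ i ∈ Finset.range K, (fun x : ℝ => x ^ (-r)) ((n : ℝ) + ((i + 1 : ℕ) : ℝ)) := by
        rw [← Finset.sum_filter]
        have hsub : (Finset.range K).filter (fun m => n < m) ⊆
            Finset.Ico (n + 1) (n + 1 + K) := by
          intro m hm
          simp only [Finset.mem_filter, Finset.mem_range] at hm
          rw [Finset.mem_Ico]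
          omega
        calc ∑ m ∈ (Finset.range K).filter (fun m => n < m), (m : ℝ) ^ (-r)
            ≤ ∑ m ∈ Finset.Ico (n + 1) (n + 1 + K), (m : ℝ) ^ (-r) :=
              Finset.sum_le_sum_of_subset_of_nonneg hsub
                (fun m _ _ => Real.rpow_nonneg (Nat.cast_nonneg m) _)
          _ = ∑ i ∈ Finset.range K, (fun x : ℝ => x ^ (-r)) ((n : ℝ) + ((i + 1 : ℕ) : ℝ)) := by
              rw [Finset.sum_Ico_eq_sum_range]
              simp only [Nat.add_sub_cancel_left]
              refine Finset.sum_congr rfl fun i _ => ?_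
              push_cast
              ring_nf
    _ ≤ ∫ x in (n : ℝ)..((n : ℝ) + K), x ^ (-r) := hint
    _ ≤ (r - 1)⁻¹ * (n : ℝ) ^ (1 - r) := by
        rw [integral_rpow (Or.inr ⟨by intro h; rw [neg_eq_iff_eq_neg] at h; norm_num at h; linarith,
          by rw [Set.uIcc_of_le (by linarith : (n:ℝ) ≤ (n:ℝ) + K)]
             rintro ⟨h1, -⟩
             linarith⟩)]
        have h1 : (0:ℝ) ≤ ((n : ℝ) + K) ^ (-r + 1) := Real.rpow_nonneg (by positivity) _
        have heq : (((n:ℝ) + K) ^ (-r + 1) - (n:ℝ) ^ (-r + 1)) / (-r + 1)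
            = ((n:ℝ) ^ (-r + 1) - ((n:ℝ) + K) ^ (-r + 1)) / (r - 1) := by
          rw [div_eq_div_iff (by linarith) (by linarith)]
          ring
        rw [heq]
        have : (1 : ℝ) - r = -r + 1 := by ring
        rw [this, ← div_eq_inv_mul]
        gcongr
        · linarith

lemma hident {r : ℝ} {x y : ℝ} (hx : 0 < x) (hy : 0 < y) :
    y ^ (-r) * (x / y) ^ (1 - r) = x ^ (1 - r) * y⁻¹ := by
  rw [Real.div_rpow hx.le hy.le,
    show y ^ (-r) * (x ^ (1-r) / y ^ (1-r)) = x ^ (1-r) * (y ^ (-r) / y ^ (1-r)) by ring,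
    ← Real.rpow_sub hy, show -r - (1 - r) = -1 by ring, Real.rpow_neg_one]

lemma floor_div_lb {N m : ℕ} (hm : 0 < m) : (N : ℝ) / m - 1 < ((N / m : ℕ) : ℝ) := by
  have h1 : m * (N / m) + N % m = N := Nat.div_add_mod N m
  have h2 : N % m < m := Nat.mod_lt N hm
  have hm' : (0:ℝ) < m := by exact_mod_cast hm
  have h3 : (N:ℝ) < (m:ℝ) * ((N/m : ℕ) : ℝ) + m := by
    have h4 := congrArg (Nat.cast : ℕ → ℝ) h1
    push_cast at h4
    have h2' : ((N % m : ℕ):ℝ) < m := by exact_mod_cast h2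
    linarith
  rw [sub_lt_iff_lt_add, div_lt_iff₀ hm']
  nlinarith

/-- The main induction on dimension. -/
lemma key {r : ℝ} (hr : 1 < r) (d : ℕ) :
    ∃ c C : ℝ, 0 < c ∧ 0 < C ∧ ∀ N : ℕ, 2 ≤ N →
      ENNReal.ofReal (c * (N : ℝ) ^ (1 - r) * (1 + Real.log N) ^ d) ≤ S r (d + 1) N ∧
      S r (d + 1) N ≤ ENNReal.ofReal (C * (N : ℝ) ^ (1 - r) * (1 + Real.log N) ^ d) := by
  induction d with
  | zero =>
    refine ⟨2 * 3 ^ (-r), (r - 1)⁻¹,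
      mul_pos two_pos (Real.rpow_pos_of_pos (by norm_num) _),
      inv_pos.mpr (by linarith), fun N hN => ?_⟩
    have hN1 : 1 ≤ N := by omega
    rw [S_one]
    simp only [pow_zero, mul_one]
    exact ⟨tail_lb hr hN1, tail_ub hr hN1⟩
  | succ d ih =>
    obtain ⟨c, C, hc, hC, IH⟩ := ih
    set z := ∑' m : ℕ, (m : ℝ) ^ (-r) with hzdef
    have hz : 0 ≤ z := z_nonneg hr
    refine ⟨c * (1/4) ^ d * (Real.log 2 / (2 * (1 + Real.log 2))),
      C * 2 ^ (r - 1) + z ^ (d + 1) * (r - 1)⁻¹ * 4 ^ (r - 1),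
      by positivity, ?_, fun N hN => ?_⟩
    · have h1 : 0 < C * 2 ^ (r - 1) := mul_pos hC (Real.rpow_pos_of_pos (by norm_num) _)
      have h2 : 0 ≤ z ^ (d + 1) * (r - 1)⁻¹ * 4 ^ (r - 1) := by
        have := pow_nonneg hz (d + 1)
        have h3 : (0:ℝ) ≤ (r - 1)⁻¹ := by
          rw [inv_nonneg]
          linarith
        positivity
      linarith
    have hN0 : (0:ℝ) < N := by positivity
    have hN2 : (2:ℝ) ≤ N := by exact_mod_cast hN
    have hlogN : Real.log 2 ≤ Real.log N := Real.log_le_log (by norm_num) hN2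
    have hlog2 : (0:ℝ) < Real.log 2 := Real.log_pos (by norm_num)
    have hL1 : (1:ℝ) ≤ 1 + Real.log N := by linarith
    have hL0 : (0:ℝ) ≤ 1 + Real.log N := by linarith
    set L := 1 + Real.log N with hLdef
    rw [S_succ]
    set g : ℕ → ℝ≥0∞ := fun m => if 1 ≤ m
      then ENNReal.ofReal ((m : ℝ) ^ (-r)) * S r (d + 1) (N / m) else 0 with hg
    clear_value g
    constructor
    · -- LOWER BOUND
      set s := Nat.sqrt N with hs
      have hs1 : 1 ≤ s := by
        rw [hs, Nat.le_sqrt]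
        omega
      have hss : s * s ≤ N := by
        have h := Nat.sqrt_le' N
        rwa [pow_two] at h
      have hs0 : (0:ℝ) < s := by exact_mod_cast hs1
      have hs1' : (1:ℝ) ≤ (s:ℝ) := by exact_mod_cast hs1
      have hsucc : (N:ℝ) < ((s:ℝ) + 1) * ((s:ℝ) + 1) := by
        have h1 : N < (s + 1) ^ 2 := Nat.lt_succ_sqrt' N
        rw [pow_two] at h1
        exact_mod_cast h1
      have hNs : (N:ℝ) < (2 * s) ^ 2 := by
        nlinarith [mul_nonneg (by linarith : (0:ℝ) ≤ (s:ℝ) - 1)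
          (by linarith : (0:ℝ) ≤ 3 * (s:ℝ) + 1)]
      have hlogs : L ≤ 4 * (1 + Real.log s) := by
        have h1 : Real.log N ≤ Real.log ((2 * s) ^ 2) := Real.log_le_log hN0 (by nlinarith)
        have h2 : Real.log ((2 * s) ^ 2) = 2 * (Real.log 2 + Real.log s) := by
          rw [Real.log_pow, Real.log_mul (by norm_num) (by positivity)]
          push_cast
          ring
        have h3 : Real.log 2 ≤ 1 := by
          have := Real.log_le_sub_one_of_pos (by norm_num : (0:ℝ) < 2)
          linarith
        have h4 : 0 ≤ Real.log s := Real.log_nonneg (by exact_mod_cast hs1)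
        rw [hLdef]
        linarith
      -- the per-term lower bound
      have hterm : ∀ m ∈ Finset.Icc 1 s,
          ENNReal.ofReal ((c * ((L/4) ^ d) * (N:ℝ) ^ (1 - r)) * (m:ℝ)⁻¹) ≤ g m := by
        intro m hm
        rw [Finset.mem_Icc] at hm
        obtain ⟨hm1, hms⟩ := hm
        have hm0 : (0:ℝ) < m := by exact_mod_cast hm1
        have hNm2 : 2 ≤ N / m := by
          rcases eq_or_lt_of_le hm1 with h1 | h2
          · rw [← h1]; simpa using hN
          · have h2m : 2 * m ≤ N := by
              calc 2 * m ≤ m * m := by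
                    have : 2 ≤ m := h2
                    exact Nat.mul_le_mul_right m this
                _ ≤ s * s := Nat.mul_le_mul hms hms
                _ ≤ N := hss
            exact (Nat.le_div_iff_mul_le (by omega)).mpr (by omega)
        have hsNm : s ≤ N / m := by
          calc s ≤ N / s := (Nat.le_div_iff_mul_le (by omega)).mpr hss
            _ ≤ N / m := Nat.div_le_div_left hms (by omega)
        have hq0 : (0:ℝ) < ((N / m : ℕ) : ℝ) := by
          have : 0 < N / m := by omega
          exact_mod_cast this
        rw [hg]
        dsimp only
        rw [if_pos hm1]
        have hIH := (IH (N / m) hNm2).1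
        refine le_trans ?_ (mul_le_mul_right hIH (ENNReal.ofReal ((m:ℝ) ^ (-r))))
        rw [← ENNReal.ofReal_mul (Real.rpow_nonneg (Nat.cast_nonneg m) _)]
        refine ENNReal.ofReal_le_ofReal ?_
        have e1 : ((N:ℝ) / m) ^ (1 - r) ≤ ((N / m : ℕ) : ℝ) ^ (1 - r) := by
          refine Real.rpow_le_rpow_of_nonpos hq0 ?_ (by linarith)
          exact Nat.cast_div_le
        have e2 : (L / 4) ^ d ≤ (1 + Real.log ((N / m : ℕ) : ℝ)) ^ d := by
          refine pow_le_pow_left₀ (by positivity) ?_ d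
          have : Real.log s ≤ Real.log ((N / m : ℕ) : ℝ) := by
            refine Real.log_le_log hs0 ?_
            exact_mod_cast hsNm
          linarith
        have e3 : (m:ℝ) ^ (-r) * ((N:ℝ) / m) ^ (1 - r) = (N:ℝ) ^ (1 - r) * (m:ℝ)⁻¹ :=
          hident hN0 hm0
        calc c * (L/4) ^ d * (N:ℝ) ^ (1-r) * (m:ℝ)⁻¹
            = (c * (L/4) ^ d) * ((m:ℝ) ^ (-r) * ((N:ℝ)/m) ^ (1-r)) := by rw [e3]; ring
          _ ≤ (c * (1 + Real.log ((N / m : ℕ) : ℝ)) ^ d) *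
                ((m:ℝ) ^ (-r) * ((N / m : ℕ) : ℝ) ^ (1-r)) := by
              have h0 : (0:ℝ) ≤ (m:ℝ) ^ (-r) := Real.rpow_nonneg (by positivity) _
              have h1 : (0:ℝ) ≤ ((N:ℝ)/m) ^ (1-r) := Real.rpow_nonneg (by positivity) _
              have hq1 : (0:ℝ) ≤ Real.log ((N / m : ℕ) : ℝ) :=
                Real.log_nonneg (by exact_mod_cast (by omega : 1 ≤ N / m))
              have hP' : (0:ℝ) ≤ (1 + Real.log ((N / m : ℕ) : ℝ)) ^ d :=
                pow_nonneg (by linarith) d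
              have hA : (m:ℝ) ^ (-r) * ((N:ℝ)/m) ^ (1-r)
                  ≤ (m:ℝ) ^ (-r) * ((N / m : ℕ) : ℝ) ^ (1-r) :=
                mul_le_mul_of_nonneg_left e1 h0
              exact mul_le_mul (mul_le_mul_of_nonneg_left e2 hc.le) hA
                (mul_nonneg h0 h1) (mul_nonneg hc.le hP')
          _ = (m:ℝ) ^ (-r) * (c * ((N / m : ℕ) : ℝ) ^ (1-r) *
                (1 + Real.log ((N / m : ℕ) : ℝ)) ^ d) := by ring
      -- sum the lower bounds
      have hsum : ∑ m ∈ Finset.Icc 1 s,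
          ENNReal.ofReal ((c * ((L/4) ^ d) * (N:ℝ) ^ (1 - r)) * (m:ℝ)⁻¹) ≤ ∑' m, g m :=
        le_trans (Finset.sum_le_sum hterm) (ENNReal.sum_le_tsum _)
      refine le_trans ?_ hsum
      clear hsum hterm hg g IH
      rw [← ENNReal.ofReal_sum_of_nonneg (fun m _ => by positivity), ← Finset.mul_sum]
      refine ENNReal.ofReal_le_ofReal ?_
      have hH : Real.log N / 2 ≤ ∑ m ∈ Finset.Icc 1 s, (m:ℝ)⁻¹ := by
        refine le_trans ?_ (harmonic_lb s)
        have h1 : Real.log N < 2 * Real.log ((s:ℝ) + 1) := by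
          have : (N:ℝ) < ((s:ℝ)+1) ^ 2 := by
            rw [pow_two]
            exact hsucc
          have := Real.log_lt_log hN0 this
          rw [Real.log_pow] at this
          push_cast at this
          linarith
        linarith
      have hκ : Real.log 2 / (1 + Real.log 2) * L ≤ Real.log N := by
        rw [hLdef, div_mul_eq_mul_div, div_le_iff₀ (by positivity)]
        nlinarith
      have hpow : (L/4) ^ d = (1/4) ^ d * L ^ d := by
        rw [← mul_pow]
        ring_nf
      have hkk : Real.log 2 / (2 * (1 + Real.log 2)) = Real.log 2 / (1 + Real.log 2) / 2 := by
        rw [div_div, mul_comm]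
      calc c * (1/4) ^ d * (Real.log 2 / (2 * (1 + Real.log 2))) * (N:ℝ) ^ (1-r) * L ^ (d+1)
          = (c * (L/4) ^ d * (N:ℝ) ^ (1-r)) * ((Real.log 2 / (1 + Real.log 2) * L) / 2) := by
            rw [hpow, hkk]
            ring
        _ ≤ (c * (L/4) ^ d * (N:ℝ) ^ (1-r)) * (Real.log N / 2) := by
            have h0 : (0:ℝ) ≤ c * (L/4) ^ d * (N:ℝ) ^ (1-r) := by positivity
            refine mul_le_mul_of_nonneg_left ?_ h0
            linarith
        _ ≤ (c * (L/4) ^ d * (N:ℝ) ^ (1-r)) * ∑ m ∈ Finset.Icc 1 s, (m:ℝ)⁻¹ := by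
            have h0 : (0:ℝ) ≤ c * (L/4) ^ d * (N:ℝ) ^ (1-r) := by positivity
            exact mul_le_mul_of_nonneg_left hH h0
    · -- UPPER BOUND
      have hN21 : 1 ≤ N / 2 := by omega
      set g₁ : ℕ → ℝ≥0∞ := fun m => if 1 ≤ m ∧ m ≤ N / 2
        then ENNReal.ofReal ((m : ℝ) ^ (-r)) * S r (d + 1) (N / m) else 0 with hg1
      set g₂ : ℕ → ℝ≥0∞ := fun m => if N / 2 < m
        then ENNReal.ofReal ((m : ℝ) ^ (-r)) * S r (d + 1) (N / m) else 0 with hg2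
      have hsplit : ∀ m, g m = g₁ m + g₂ m := by
        intro m
        rw [hg, hg1, hg2]
        dsimp only
        rcases Nat.lt_or_ge (N/2) m with h | h
        · rw [if_pos (by omega : 1 ≤ m), if_neg (by omega : ¬(1 ≤ m ∧ m ≤ N/2)),
            if_pos h, zero_add]
        · rw [if_neg (by omega : ¬ N/2 < m)]
          rcases Nat.eq_zero_or_pos m with rfl | hm
          · rw [if_neg (by omega), if_neg (by omega : ¬(1 ≤ 0 ∧ 0 ≤ N/2)), add_zero]
          · rw [if_pos (by omega : 1 ≤ m), if_pos (by omega : 1 ≤ m ∧ m ≤ N/2), add_zero]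
      have htsum : ∑' m, g m = (∑' m, g₁ m) + ∑' m, g₂ m := by
        rw [← ENNReal.tsum_add]
        exact tsum_congr hsplit
      rw [htsum]
      have hsplit2 : ((N:ℝ)/2) ^ (1-r) = 2 ^ (r-1) * (N:ℝ) ^ (1-r) := by
        rw [Real.div_rpow hN0.le (by norm_num : (0:ℝ) ≤ 2), div_eq_mul_inv,
          ← Real.rpow_neg (by norm_num : (0:ℝ) ≤ 2), neg_sub, mul_comm]
      have hsplit4 : ((N:ℝ)/4) ^ (1-r) = 4 ^ (r-1) * (N:ℝ) ^ (1-r) := by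
        rw [Real.div_rpow hN0.le (by norm_num : (0:ℝ) ≤ 4), div_eq_mul_inv,
          ← Real.rpow_neg (by norm_num : (0:ℝ) ≤ 4), neg_sub, mul_comm]
      have hb1 : ∑' m, g₁ m ≤
          ENNReal.ofReal (C * 2 ^ (r-1) * (N:ℝ) ^ (1-r) * L ^ (d+1)) := by
        have hfin : ∑' m, g₁ m = ∑ m ∈ Finset.Icc 1 (N/2), g₁ m := by
          refine tsum_eq_sum fun m hm => ?_
          rw [Finset.mem_Icc] at hm
          rw [hg1]
          dsimp only
          rw [if_neg (by omega : ¬(1 ≤ m ∧ m ≤ N/2))]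
        rw [hfin]
        have hterm : ∀ m ∈ Finset.Icc 1 (N/2),
            g₁ m ≤ ENNReal.ofReal ((C * ((N:ℝ)/2) ^ (1-r) * L ^ d) * (m:ℝ)⁻¹) := by
          intro m hm
          rw [Finset.mem_Icc] at hm
          obtain ⟨hm1, hm2⟩ := hm
          have hm0 : (0:ℝ) < m := by exact_mod_cast hm1
          have h2m : 2 * m ≤ N := by
            have := (Nat.le_div_iff_mul_le (by norm_num : 0 < 2)).mp hm2
            omega
          have hNm2 : 2 ≤ N / m := (Nat.le_div_iff_mul_le (by omega : 0 < m)).mpr (by omega)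
          have hq0 : (0:ℝ) < ((N/m : ℕ):ℝ) := by exact_mod_cast (by omega : 0 < N/m)
          rw [hg1]
          dsimp only
          rw [if_pos ⟨hm1, hm2⟩]
          refine le_trans (mul_le_mul_right (IH (N/m) hNm2).2 _) ?_
          rw [← ENNReal.ofReal_mul (Real.rpow_nonneg (Nat.cast_nonneg m) _)]
          refine ENNReal.ofReal_le_ofReal ?_
          have e1 : ((N/m : ℕ):ℝ) ^ (1-r) ≤ ((N:ℝ)/(2*m)) ^ (1-r) := by
            refine Real.rpow_le_rpow_of_nonpos (by positivity) ?_ (by linarith)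
            have hfl := floor_div_lb (N := N) (by omega : 0 < m)
            have hx1 : (1:ℝ) ≤ (N:ℝ)/(2*m) := by
              rw [le_div_iff₀ (by positivity : (0:ℝ) < 2*m), one_mul]
              exact_mod_cast h2m
            have hdd : (N:ℝ)/m = 2 * ((N:ℝ)/(2*m)) := by
              field_simp
            linarith
          have hq1 : (0:ℝ) ≤ 1 + Real.log ((N/m : ℕ):ℝ) := by
            have := Real.log_nonneg (by exact_mod_cast (by omega : 1 ≤ N/m) : (1:ℝ) ≤ ((N/m : ℕ):ℝ))
            linarith
          have e2 : (1 + Real.log ((N/m : ℕ):ℝ)) ^ d ≤ L ^ d := by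
            refine pow_le_pow_left₀ hq1 ?_ d
            have : Real.log ((N/m : ℕ):ℝ) ≤ Real.log N :=
              Real.log_le_log hq0 (by exact_mod_cast Nat.div_le_self N m)
            rw [hLdef]
            linarith
          have e3 : (m:ℝ)^(-r) * ((N:ℝ)/(2*m))^(1-r) = ((N:ℝ)/2)^(1-r) * (m:ℝ)⁻¹ := by
            have h := hident (r := r) (x := (N:ℝ)/2) (y := (m:ℝ)) (by positivity) hm0
            rw [show (N:ℝ)/2/(m:ℝ) = (N:ℝ)/(2*m) by ring] at h
            exact h
          calc (m:ℝ)^(-r) * (C * ((N/m : ℕ):ℝ)^(1-r) * (1 + Real.log ((N/m : ℕ):ℝ))^d)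
              ≤ (m:ℝ)^(-r) * (C * ((N:ℝ)/(2*m))^(1-r) * L^d) := by
                have h0 : (0:ℝ) ≤ (m:ℝ)^(-r) := Real.rpow_nonneg hm0.le _
                refine mul_le_mul_of_nonneg_left ?_ h0
                refine mul_le_mul (mul_le_mul_of_nonneg_left e1 hC.le) e2
                  (pow_nonneg hq1 d) ?_
                positivity
            _ = (C * ((N:ℝ)/2)^(1-r) * L^d) * (m:ℝ)⁻¹ := by
                rw [show (m:ℝ)^(-r) * (C * ((N:ℝ)/(2*m))^(1-r) * L^d)
                  = (C * L^d) * ((m:ℝ)^(-r) * ((N:ℝ)/(2*m))^(1-r)) by ring, e3]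
                ring
        refine le_trans (Finset.sum_le_sum hterm) ?_
        rw [← ENNReal.ofReal_sum_of_nonneg (fun m _ => by positivity), ← Finset.mul_sum]
        refine ENNReal.ofReal_le_ofReal ?_
        have hH2 : ∑ m ∈ Finset.Icc 1 (N/2), (m:ℝ)⁻¹ ≤ L := by
          refine le_trans (harmonic_ub (N/2)) ?_
          rw [hLdef]
          have h0 : (0:ℝ) < ((N/2 : ℕ):ℝ) := by exact_mod_cast (by omega : 0 < N/2)
          have : Real.log ((N/2 : ℕ):ℝ) ≤ Real.log N :=
            Real.log_le_log h0 (by exact_mod_cast Nat.div_le_self N 2)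
          linarith
        have hA0 : (0:ℝ) ≤ C * ((N:ℝ)/2)^(1-r) * L^d := by
          have := pow_nonneg hL0 d
          positivity
        calc (C * ((N:ℝ)/2)^(1-r) * L^d) * ∑ m ∈ Finset.Icc 1 (N/2), (m:ℝ)⁻¹
            ≤ (C * ((N:ℝ)/2)^(1-r) * L^d) * L := mul_le_mul_of_nonneg_left hH2 hA0
          _ = C * 2^(r-1) * (N:ℝ)^(1-r) * L^(d+1) := by
              rw [hsplit2]
              ring
      have hb2 : ∑' m, g₂ m ≤
          ENNReal.ofReal ((z^(d+1) * (r-1)⁻¹ * 4^(r-1)) * (N:ℝ)^(1-r) * L^(d+1)) := by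
        have hle : ∀ m, g₂ m ≤ (if N/2 < m then ENNReal.ofReal ((m:ℝ)^(-r)) else 0)
            * ENNReal.ofReal (z^(d+1)) := by
          intro m
          rw [hg2]
          dsimp only
          split
          · exact mul_le_mul_right (S_le_const hr _ _) _
          · simp
        refine le_trans (ENNReal.tsum_le_tsum hle) ?_
        rw [ENNReal.tsum_mul_right]
        have hT : (∑' m : ℕ, if N/2 < m then ENNReal.ofReal ((m:ℝ)^(-r)) else 0)
            = T r (N/2) := rfl
        rw [hT]
        refine le_trans (mul_le_mul_left (tail_ub hr hN21) _) ?_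
        rw [← ENNReal.ofReal_mul (mul_nonneg (by rw [inv_nonneg]; linarith)
          (Real.rpow_nonneg (Nat.cast_nonneg _) _))]
        refine ENNReal.ofReal_le_ofReal ?_
        have hzp : (0:ℝ) ≤ z^(d+1) := pow_nonneg hz _
        have hrp : (0:ℝ) ≤ (r-1)⁻¹ := by
          rw [inv_nonneg]
          linarith
        have e4 : ((N/2 : ℕ):ℝ)^(1-r) ≤ ((N:ℝ)/4)^(1-r) := by
          refine Real.rpow_le_rpow_of_nonpos (by positivity) ?_ (by linarith)
          have h4 : N ≤ 4 * (N/2) := by omega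
          have h4' : (N:ℝ) ≤ 4 * ((N/2 : ℕ):ℝ) := by exact_mod_cast h4
          rw [div_le_iff₀ (by norm_num : (0:ℝ) < 4)]
          linarith
        have hLp1 : (1:ℝ) ≤ L^(d+1) := one_le_pow₀ hL1
        have hNrp : (0:ℝ) ≤ (N:ℝ)^(1-r) := Real.rpow_nonneg hN0.le _
        calc (r-1)⁻¹ * ((N/2 : ℕ):ℝ)^(1-r) * z^(d+1)
            ≤ (r-1)⁻¹ * (((N:ℝ)/4)^(1-r)) * z^(d+1) := by
              refine mul_le_mul_of_nonneg_right (mul_le_mul_of_nonneg_left e4 hrp) hzp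
          _ = (z^(d+1) * (r-1)⁻¹ * 4^(r-1)) * (N:ℝ)^(1-r) * 1 := by
              rw [hsplit4]
              ring
          _ ≤ (z^(d+1) * (r-1)⁻¹ * 4^(r-1)) * (N:ℝ)^(1-r) * L^(d+1) := by
              refine mul_le_mul_of_nonneg_left hLp1 ?_
              have h4p : (0:ℝ) ≤ (4:ℝ)^(r-1) := Real.rpow_nonneg (by norm_num) _
              positivity
      refine le_trans (add_le_add hb1 hb2) ?_
      have hLp : (0:ℝ) ≤ L^(d+1) := pow_nonneg hL0 _
      have hzp : (0:ℝ) ≤ z^(d+1) := pow_nonneg hz _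
      have h1' : (0:ℝ) ≤ C * 2^(r-1) * (N:ℝ)^(1-r) * L^(d+1) := by positivity
      have h2' : (0:ℝ) ≤ (z^(d+1) * (r-1)⁻¹ * 4^(r-1)) * (N:ℝ)^(1-r) * L^(d+1) := by
        have hrp : (0:ℝ) ≤ (r-1)⁻¹ := by
          rw [inv_nonneg]
          linarith
        have h4p : (0:ℝ) ≤ (4:ℝ)^(r-1) := Real.rpow_nonneg (by norm_num) _
        positivity
      rw [← ENNReal.ofReal_add h1' h2']
      refine ENNReal.ofReal_le_ofReal (le_of_eq ?_)
      ring


end Stmt15Aux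

open Stmt15Aux in
/-- For `r > 1`, `∑_{k > 0, ν(k) > N} ν(k)^{-r} ≍ N^{-r+1} (log N)^{d-1}` where
`ν(k) = k_1 ⋯ k_d`, with constants depending only on `r` and `d`. -/
theorem stmt15 (d : ℕ) (hd : 1 ≤ d) (r : ℝ) (hr : 1 < r) :
    ∃ c C : ℝ, 0 < c ∧ 0 < C ∧ ∀ N : ℕ, 2 ≤ N →
      c * (N : ℝ) ^ (-r + 1) * Real.log N ^ (d - 1) ≤
        (∑' k : Fin d → ℕ, if (∀ j, 1 ≤ k j) ∧ N < ∏ j, k j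
          then ((∏ j, k j : ℕ) : ℝ) ^ (-r) else 0) ∧
      (∑' k : Fin d → ℕ, if (∀ j, 1 ≤ k j) ∧ N < ∏ j, k j
          then ((∏ j, k j : ℕ) : ℝ) ^ (-r) else 0) ≤
        C * (N : ℝ) ^ (-r + 1) * Real.log N ^ (d - 1) := by
  obtain ⟨c, C, hc, hC, H⟩ := key hr (d - 1)
  have hd1 : d - 1 + 1 = d := by omega
  rw [hd1] at H
  refine ⟨c, C * (1 + (Real.log 2)⁻¹) ^ (d - 1), hc, ?_, fun N hN => ?_⟩
  · have hlog2 : (0:ℝ) < Real.log 2 := Real.log_pos (by norm_num)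
    positivity
  have hN0 : (0:ℝ) < N := by positivity
  have hN2 : (2:ℝ) ≤ N := by exact_mod_cast hN
  have hlog2 : (0:ℝ) < Real.log 2 := Real.log_pos (by norm_num)
  have hlogN2 : Real.log 2 ≤ Real.log N := Real.log_le_log (by norm_num) hN2
  have hlogN : (0:ℝ) < Real.log N := lt_of_lt_of_le hlog2 hlogN2
  have hF0 : ∀ k : Fin d → ℕ, (0:ℝ) ≤ (if (∀ j, 1 ≤ k j) ∧ N < ∏ j, k j
      then ((∏ j, k j : ℕ) : ℝ) ^ (-r) else 0) := by
    intro k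
    split
    · exact Real.rpow_nonneg (Nat.cast_nonneg _) _
    · exact le_refl 0
  have hSF : S r d N = ∑' k : Fin d → ℕ, ENNReal.ofReal (if (∀ j, 1 ≤ k j) ∧ N < ∏ j, k j
      then ((∏ j, k j : ℕ) : ℝ) ^ (-r) else 0) := by
    rw [S]
    refine tsum_congr fun k => ?_
    split
    · rfl
    · exact ENNReal.ofReal_zero.symm
  have htop : S r d N ≠ ⊤ := ne_top_of_le_ne_top ENNReal.ofReal_ne_top (H N hN).2
  have hEq : (S r d N).toReal = ∑' k : Fin d → ℕ, (if (∀ j, 1 ≤ k j) ∧ N < ∏ j, k j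
      then ((∏ j, k j : ℕ) : ℝ) ^ (-r) else 0) := by
    rw [hSF, ENNReal.tsum_toReal_eq (fun k => ENNReal.ofReal_ne_top)]
    exact tsum_congr fun k => ENNReal.toReal_ofReal (hF0 k)
  have hrw : (-r + 1 : ℝ) = 1 - r := by ring
  rw [hrw]
  constructor
  · -- lower bound
    have h1 := (ENNReal.ofReal_le_iff_le_toReal htop).mp (H N hN).1
    rw [hEq] at h1
    refine le_trans ?_ h1
    have hp : Real.log N ^ (d-1) ≤ (1 + Real.log N) ^ (d-1) :=
      pow_le_pow_left₀ hlogN.le (by linarith) _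
    have h0 : (0:ℝ) ≤ c * (N:ℝ) ^ (1-r) := by positivity
    calc c * (N:ℝ) ^ (1-r) * Real.log N ^ (d-1)
        ≤ c * (N:ℝ) ^ (1-r) * (1 + Real.log N) ^ (d-1) :=
          mul_le_mul_of_nonneg_left hp h0
      _ = c * (N:ℝ) ^ (1-r) * (1 + Real.log N) ^ (d-1) := rfl
  · -- upper bound
    have h2 := ENNReal.toReal_le_of_le_ofReal
      (by
        have : (0:ℝ) ≤ (1 + Real.log N) ^ (d-1) := pow_nonneg (by linarith) _
        positivity) (H N hN).2
    rw [hEq] at h2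
    refine le_trans h2 ?_
    have hp : (1 + Real.log N) ^ (d-1)
        ≤ (1 + (Real.log 2)⁻¹) ^ (d-1) * Real.log N ^ (d-1) := by
      rw [← mul_pow]
      refine pow_le_pow_left₀ (by linarith) ?_ _
      have h3 : (1:ℝ) ≤ Real.log N / Real.log 2 :=
        (one_le_div hlog2).mpr hlogN2
      have h4 : (1 + (Real.log 2)⁻¹) * Real.log N
          = Real.log N + Real.log N / Real.log 2 := by
        field_simp
      rw [h4]
      linarith
    have h0 : (0:ℝ) ≤ C * (N:ℝ) ^ (1-r) := by positivity
    calc C * (N:ℝ) ^ (1-r) * (1 + Real.log N) ^ (d-1)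
        ≤ C * (N:ℝ) ^ (1-r) * ((1 + (Real.log 2)⁻¹) ^ (d-1) * Real.log N ^ (d-1)) :=
          mul_le_mul_of_nonneg_left hp h0
      _ = C * (1 + (Real.log 2)⁻¹) ^ (d-1) * (N:ℝ) ^ (1-r) * Real.log N ^ (d-1) := by
          ring
end
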